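/- arXiv:2212.03569 — 2 statements merged into one kernel-verified Lean document; each statement's English description precedes it below -/
import Mathlib

section
/- Let Σ be a regular rational fan in N_ℝ. The PP^*(N_ℚ)-module PP^*(Σ) is generated by the finitely many functions φ_σ, σ ∈ Σ; in particular PP^*(Σ) is finitely generated as a module over the polynomial algebra PP^*(N_ℚ), by elements each of which is a product of finitely many degree-one elements. -/
open scoped BigOperators

namespace PPArakelov

/-- Evaluation of a rational-coefficient multivariate polynomial at a real point. -/
noncomputable def evalR {m : ℕ} (p : MvPolynomial (Fin m) ℚ) (x : Fin m → ℝ) : ℝ :=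
  MvPolynomial.eval x (MvPolynomial.map (algebraMap ℚ ℝ) p)

/-- Realization of an integral vector in `N_ℝ`. -/
def ι {m : ℕ} (v : Fin m → ℤ) : Fin m → ℝ := fun i => (v i : ℝ)

/-- Realization of a rational vector in `N_ℝ`. -/
def ιQ {m : ℕ} (v : Fin m → ℚ) : Fin m → ℝ := fun i => (v i : ℝ)

/-- The convex cone generated by a finite set of vectors. -/
def coneOf {m : ℕ} (s : Finset (Fin m → ℝ)) : Set (Fin m → ℝ) :=
  { x | ∃ c : (Fin m → ℝ) → ℝ, (∀ v, 0 ≤ c v) ∧ x = ∑ v ∈ s, c v • v }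

/-- A rational polyhedral cone: one generated by finitely many lattice vectors. -/
def IsRatCone {m : ℕ} (σ : Set (Fin m → ℝ)) : Prop :=
  ∃ s : Finset (Fin m → ℤ), σ = coneOf (s.image ι)

/-- `τ` is a face of the cone `σ`. -/
def IsFaceOfCone {m : ℕ} (τ σ : Set (Fin m → ℝ)) : Prop :=
  ∃ u : (Fin m → ℝ) →ₗ[ℝ] ℝ, (∀ x ∈ σ, 0 ≤ u x) ∧ τ = {x ∈ σ | u x = 0}

/-- A rational polyhedral fan in `N_ℝ = ℝ^m`. -/
structure Fan (m : ℕ) where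
  cones : Set (Set (Fin m → ℝ))
  finite : cones.Finite
  rat : ∀ σ ∈ cones, IsRatCone σ
  face_mem : ∀ σ ∈ cones, ∀ τ, IsFaceOfCone τ σ → τ ∈ cones
  inter_face : ∀ σ ∈ cones, ∀ σ' ∈ cones,
    IsFaceOfCone (σ ∩ σ') σ ∧ IsFaceOfCone (σ ∩ σ') σ'

/-- The support `|Σ|` of a fan. -/
def Fan.supp {m : ℕ} (F : Fan m) : Set (Fin m → ℝ) := ⋃₀ F.cones

/-- A piecewise polynomial function on a fan (ambient version): on each cone it is
given by a polynomial with rational coefficients. -/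
def PPfun {m : ℕ} (F : Fan m) (f : (Fin m → ℝ) → ℝ) : Prop :=
  ∀ σ ∈ F.cones, ∃ p : MvPolynomial (Fin m) ℚ, ∀ x ∈ σ, f x = evalR p x

/-- A piecewise polynomial function defined on the support `|Σ|` of a fan. -/
def PPfunOn {m : ℕ} (F : Fan m) (f : ↥F.supp → ℝ) : Prop :=
  ∀ σ (hσ : σ ∈ F.cones), ∃ p : MvPolynomial (Fin m) ℚ,
    ∀ x (hx : x ∈ σ), f ⟨x, Set.mem_sUnion.mpr ⟨σ, hσ, hx⟩⟩ = evalR p x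

/-- A homogeneous piecewise polynomial function of degree `k` on a fan. -/
def PPHomog {m : ℕ} (F : Fan m) (k : ℕ) (f : (Fin m → ℝ) → ℝ) : Prop :=
  ∀ σ ∈ F.cones, ∃ p : MvPolynomial (Fin m) ℚ, p.IsHomogeneous k ∧ ∀ x ∈ σ, f x = evalR p x

/-- A piecewise linear function on a fan. -/
def IsPWLinear {m : ℕ} (F : Fan m) (f : (Fin m → ℝ) → ℝ) : Prop :=
  ∀ σ ∈ F.cones, ∃ ℓ : (Fin m → ℝ) →ₗ[ℝ] ℝ, ∀ x ∈ σ, f x = ℓ x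

/-- A regular (smooth) fan: every cone is generated by part of a basis of the lattice. -/
def Fan.IsRegular {m : ℕ} (F : Fan m) : Prop :=
  ∀ σ ∈ F.cones, ∃ (b : Module.Basis (Fin m) ℤ (Fin m → ℤ)) (s : Finset (Fin m)),
    σ = coneOf (s.image fun j => ι (b j))

/-- A compatible tuple `(f_σ)_{σ ∈ Σ}` of polynomial functions on the cones of a fan:
`f_τ = f_σ|_τ` whenever `τ` is a face of `σ`. -/
def CompatTuple {m : ℕ} (F : Fan m) (t : ∀ σ : F.cones, ↥(σ : Set (Fin m → ℝ)) → ℝ) : Prop :=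
  (∀ σ : F.cones, ∃ p : MvPolynomial (Fin m) ℚ,
      ∀ x : ↥(σ : Set (Fin m → ℝ)), t σ x = evalR p (x : Fin m → ℝ)) ∧
  ∀ σ τ : F.cones, IsFaceOfCone (τ : Set (Fin m → ℝ)) (σ : Set (Fin m → ℝ)) →
    ∀ x (hx : x ∈ (τ : Set (Fin m → ℝ))) (hx' : x ∈ (σ : Set (Fin m → ℝ))),
      t τ ⟨x, hx⟩ = t σ ⟨x, hx'⟩

/-- A rational polyhedron: convex hull of finitely many rational points plus a rational cone. -/
def polyhedronOf {m : ℕ} (V R : Finset (Fin m → ℚ)) : Set (Fin m → ℝ) :=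
  { x | ∃ a c : (Fin m → ℚ) → ℝ,
      (∀ p, 0 ≤ a p) ∧ (∑ p ∈ V, a p = 1) ∧ (∀ v, 0 ≤ c v) ∧
      x = (∑ p ∈ V, a p • ιQ p) + ∑ v ∈ R, c v • ιQ v }

def IsRatPolyhedron {m : ℕ} (P : Set (Fin m → ℝ)) : Prop :=
  ∃ V R : Finset (Fin m → ℚ), V.Nonempty ∧ P = polyhedronOf V R

/-- `Q` is a face of the polyhedron `P`. -/
def IsFaceOfPoly {m : ℕ} (Q P : Set (Fin m → ℝ)) : Prop :=
  ∃ (u : (Fin m → ℝ) →ₗ[ℝ] ℝ) (r : ℝ), (∀ x ∈ P, r ≤ u x) ∧ Q = {x ∈ P | u x = r}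

/-- A (strongly convex) rational polyhedral complex in `N_ℝ = ℝ^m`. -/
structure PolyComplex (m : ℕ) where
  polys : Set (Set (Fin m → ℝ))
  finite : polys.Finite
  rat : ∀ P ∈ polys, IsRatPolyhedron P
  face_mem : ∀ P ∈ polys, ∀ Q, IsFaceOfPoly Q P → Q.Nonempty → Q ∈ polys
  inter_face : ∀ P ∈ polys, ∀ P' ∈ polys, (P ∩ P').Nonempty →
    IsFaceOfPoly (P ∩ P') P ∧ IsFaceOfPoly (P ∩ P') P'

/-- A complete polyhedral complex covers all of `N_ℝ`. -/
def PolyComplex.IsComplete {m : ℕ} (C : PolyComplex m) : Prop := ⋃₀ C.polys = Set.univ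

/-- The vertices `Π(0)` of a polyhedral complex. -/
def PolyComplex.vtx {m : ℕ} (C : PolyComplex m) : Set (Fin m → ℝ) :=
  {v | ({v} : Set (Fin m → ℝ)) ∈ C.polys}

/-- The cone of a polyhedron `P` at a point `v` (the cone of `P` in the star fan `Π(v)`). -/
def coneAt {m : ℕ} (v : Fin m → ℝ) (P : Set (Fin m → ℝ)) : Set (Fin m → ℝ) :=
  {y | ∃ c : ℝ, 0 ≤ c ∧ ∃ x ∈ P, y = c • (x - v)}

/-- A piecewise polynomial function of degree `≤ k` on the star fan `Π(v)` at a vertex `v`. -/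
def StarPP {m : ℕ} (C : PolyComplex m) (v : Fin m → ℝ) (k : ℕ)
    (f : (Fin m → ℝ) → ℝ) : Prop :=
  ∀ P ∈ C.polys, v ∈ P → ∃ p : MvPolynomial (Fin m) ℚ, p.totalDegree ≤ k ∧
    ∀ y ∈ coneAt v P, f y = evalR p y

/-- A full-dimensional subset of `ℝ^m`. -/
def FullDim {m : ℕ} (P : Set (Fin m → ℝ)) : Prop := (interior P).Nonempty

/-- An affine piecewise polynomial function of degree `k` on a polyhedral complex:
a tuple `(f_v)` of piecewise polynomial functions on the star fans `Π(v)` such that on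
every full-dimensional polyhedron `Λ` with vertices `v, v'`, the representing polynomials
agree: `f_{v,Λ} = f_{v',Λ}` as polynomial functions on `N_ℝ`. -/
def AffinePP {m : ℕ} (C : PolyComplex m) (k : ℕ)
    (f : (Fin m → ℝ) → ((Fin m → ℝ) → ℝ)) : Prop :=
  (∀ v ∈ C.vtx, StarPP C v k (f v)) ∧
  ∀ Λ ∈ C.polys, FullDim Λ → ∀ v ∈ C.vtx, v ∈ Λ → ∀ v' ∈ C.vtx, v' ∈ Λ →
    ∀ p p' : MvPolynomial (Fin m) ℚ,
      p.totalDegree ≤ k → (∀ y ∈ coneAt v Λ, f v y = evalR p y) →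
      p'.totalDegree ≤ k → (∀ y ∈ coneAt v' Λ, f v' y = evalR p' y) →
      ∀ x : Fin m → ℝ, evalR p (x - v) = evalR p' (x - v')

/-- `y` lies in the support of the star fan of `v`. -/
def InStar {m : ℕ} (C : PolyComplex m) (v y : Fin m → ℝ) : Prop :=
  ∃ P ∈ C.polys, v ∈ P ∧ y ∈ coneAt v P

/-- A piecewise affine function with respect to the complex `C` (rational coefficients). -/
def IsPA {m : ℕ} (C : PolyComplex m) (g : (Fin m → ℝ) → ℝ) : Prop :=
  Continuous g ∧ ∀ Λ ∈ C.polys, ∃ p : MvPolynomial (Fin m) ℚ, p.totalDegree ≤ 1 ∧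
    ∀ x ∈ Λ, g x = evalR p x

/-- The tuple `f = (f_v)` induces the global function `g`. -/
def Induces {m : ℕ} (C : PolyComplex m) (f : (Fin m → ℝ) → ((Fin m → ℝ) → ℝ))
    (g : (Fin m → ℝ) → ℝ) : Prop :=
  ∀ v ∈ C.vtx, ∀ Λ ∈ C.polys, v ∈ Λ → ∀ x ∈ Λ, g x = f v (x - v)

/-- `γ` is a bounded edge of the complex `C` with endpoints `v ≠ w`. -/
def IsBddEdge {m : ℕ} (C : PolyComplex m) (γ : Set (Fin m → ℝ)) (v w : Fin m → ℝ) : Prop :=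
  γ ∈ C.polys ∧ v ≠ w ∧ v ∈ C.vtx ∧ w ∈ C.vtx ∧ γ = segment ℝ v w

/-- The condition that the tuple `(f_v)` lies in the kernel of the map `ρ`: for every
bounded edge `γ` with endpoints `v, w`, the pullbacks of `f_v` and `f_w` to the star of `γ`
agree (affinely based at the respective vertices). -/
def KerRho {m : ℕ} (C : PolyComplex m)
    (f : (Fin m → ℝ) → ((Fin m → ℝ) → ℝ)) : Prop :=
  ∀ γ v w, IsBddEdge C γ v w → ∀ P ∈ C.polys, γ ⊆ P → ∀ x ∈ P, f v (x - v) = f w (x - w)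

/-- `C'` refines (subdivides) `C`. -/
def Refines {m : ℕ} (C' C : PolyComplex m) : Prop :=
  ∀ P' ∈ C'.polys, ∃ P ∈ C.polys, P' ⊆ P

/-- The cone `c(P) ⊆ N_ℝ × ℝ_{≥0}` over a polyhedron `P ⊆ N_ℝ`. -/
def cPoly {m : ℕ} (P : Set (Fin m → ℝ)) : Set (Fin (m + 1) → ℝ) :=
  closure { z | 0 < z (Fin.last m) ∧ (fun i : Fin m => z i.castSucc / z (Fin.last m)) ∈ P }

/-- A regular SCR polyhedral complex: the cone `c(P)` of every polyhedron is a regular cone. -/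
def PolyComplex.IsRegular {m : ℕ} (C : PolyComplex m) : Prop :=
  ∀ P ∈ C.polys, ∃ (b : Module.Basis (Fin (m + 1)) ℤ (Fin (m + 1) → ℤ)) (s : Finset (Fin (m + 1))),
    cPoly P = coneOf (s.image fun j => ι (b j))

/-- The recession cone of a polyhedron. -/
def recCone {m : ℕ} (P : Set (Fin m → ℝ)) : Set (Fin m → ℝ) :=
  {y | ∀ x ∈ P, ∀ c : ℝ, 0 ≤ c → x + c • y ∈ P}

/-- The recession fan (as a set of cones) of a polyhedral complex. -/
def recSet {m : ℕ} (C : PolyComplex m) : Set (Set (Fin m → ℝ)) :=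
  {σ | ∃ P ∈ C.polys, σ = recCone P}

/-- Membership in `R(Σ)`: complete regular SCR polyhedral complexes with recession fan `Σ`. -/
def InRSigma {m : ℕ} (F : Fan m) (C : PolyComplex m) : Prop :=
  C.IsComplete ∧ C.IsRegular ∧ recSet C = F.cones

/-- Homogeneous piecewise polynomial functions of degree `k` on the fan `c(Π)`. -/
def PPconeHom {m : ℕ} (C : PolyComplex m) (k : ℕ) (f : (Fin (m + 1) → ℝ) → ℝ) : Prop :=
  ∀ P ∈ C.polys, ∃ p : MvPolynomial (Fin (m + 1)) ℚ, p.IsHomogeneous k ∧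
    ∀ z ∈ cPoly P, f z = evalR p z

/-- `PP^k_Σ(N_ℝ ⊕ ℝ_{≥0})`: functions that are piecewise polynomial of degree `k`
with respect to `c(Π)` for some `Π ∈ R(Σ)`. -/
def PPSigma {m : ℕ} (F : Fan m) (k : ℕ) (f : (Fin (m + 1) → ℝ) → ℝ) : Prop :=
  ∃ C : PolyComplex m, InRSigma F C ∧ PPconeHom C k f

/-- The canonical piecewise-linear function attached to the ray through `v` (value `1` at
`v`, vanishing on cones not containing `v`). -/
def IsRayFunGen {m : ℕ} (F : Fan m) (v : Fin m → ℝ) (f : (Fin m → ℝ) → ℝ) : Prop :=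
  IsPWLinear F f ∧ PPfun F f ∧ f v = 1 ∧
  ∀ σ ∈ F.cones, v ∉ σ → ∀ x ∈ σ, f x = 0

/-- A family `σ ↦ φ_σ` of canonical piecewise polynomial generators: `φ_σ` is the product
of the ray functions of the rays of the regular cone `σ`. -/
def IsCanonFamily {m : ℕ} (F : Fan m) (Φ : Set (Fin m → ℝ) → ((Fin m → ℝ) → ℝ)) : Prop :=
  ∀ σ ∈ F.cones, ∃ (b : Module.Basis (Fin m) ℤ (Fin m → ℤ)) (s : Finset (Fin m))
    (rf : Fin m → ((Fin m → ℝ) → ℝ)),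
      σ = coneOf (s.image fun j => ι (b j)) ∧
      (∀ j ∈ s, IsRayFunGen F (ι (b j)) (rf j)) ∧
      ∀ x, Φ σ x = ∏ j ∈ s, rf j x

/-- A maximal (full-dimensional) cone of a fan. -/
def IsMaxCone {m : ℕ} (F : Fan m) (σ : Set (Fin m → ℝ)) : Prop :=
  σ ∈ F.cones ∧ Submodule.span ℝ σ = ⊤

/-- `σ` is the minimal cone of `F` containing the set `S`. -/
def IsMinConeOver {m : ℕ} (F : Fan m) (S σ : Set (Fin m → ℝ)) : Prop :=
  σ ∈ F.cones ∧ S ⊆ σ ∧ ∀ τ ∈ F.cones, S ⊆ τ → σ ⊆ τ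

/-- The polynomial `p` represents the function `f` on the cone `σ`. -/
def Represents {m : ℕ} (f : (Fin m → ℝ) → ℝ) (σ : Set (Fin m → ℝ))
    (p : MvPolynomial (Fin m) ℚ) : Prop :=
  ∀ x ∈ σ, f x = evalR p x

/-- Maximal cones of `F'` whose image under `μ` has minimal containing cone `σ` in `F`. -/
def MaxOver {m : ℕ} (F' F : Fan m) (μ : (Fin m → ℝ) ≃ₗ[ℝ] (Fin m → ℝ))
    (σ : Set (Fin m → ℝ)) : Set (Set (Fin m → ℝ)) :=
  {σ' | IsMaxCone F' σ' ∧ IsMinConeOver F (μ '' σ') σ}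

/-- The operator `P` realizes the pushforward formula
`(π_* f)_σ = φ_σ · Σ_{μ(σ')=σ} φ_{σ'}^{-1} f_{σ'}` on maximal cones (with cleared
denominators, as an identity of the unique representing polynomials). -/
def PushFormula {m : ℕ} (F' F : Fan m) (μ : (Fin m → ℝ) ≃ₗ[ℝ] (Fin m → ℝ))
    (Φ' Φ : Set (Fin m → ℝ) → ((Fin m → ℝ) → ℝ))
    (P : ((Fin m → ℝ) → ℝ) → ((Fin m → ℝ) → ℝ)) : Prop :=
  (∀ f, PPfun F' f → PPfun F (P f)) ∧
  ∀ f, PPfun F' f →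
    ∀ q pΦ' : Set (Fin m → ℝ) → MvPolynomial (Fin m) ℚ,
      (∀ σ', IsMaxCone F' σ' → Represents f σ' (q σ') ∧ Represents (Φ' σ') σ' (pΦ' σ')) →
      ∀ σ, IsMaxCone F σ →
        ∀ r pσ : MvPolynomial (Fin m) ℚ, Represents (P f) σ r → Represents (Φ σ) σ pσ →
          ∀ y : Fin m → ℝ,
            evalR r y * ∏ᶠ σ' ∈ MaxOver F' F μ σ, evalR (pΦ' σ') (μ.symm y)
              = evalR pσ y * ∑ᶠ σ' ∈ MaxOver F' F μ σ,
                  evalR (q σ') (μ.symm y) *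
                    ∏ᶠ σ'' ∈ (MaxOver F' F μ σ) \ {σ'}, evalR (pΦ' σ'') (μ.symm y)

/-- The pullback of an affine piecewise polynomial tuple along a refinement `C' → C`. -/
def IsPullbackTuple {m : ℕ} (C C' : PolyComplex m) (k : ℕ)
    (f f' : (Fin m → ℝ) → ((Fin m → ℝ) → ℝ)) : Prop :=
  (∀ v' ∈ C'.vtx, v' ∈ C.vtx → ∀ y, InStar C' v' y → f' v' y = f v' y) ∧
  (∀ v' ∈ C'.vtx, v' ∉ C.vtx → ∀ Λ ∈ C.polys, FullDim Λ → v' ∈ Λ →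
    ∀ v ∈ C.vtx, v ∈ Λ → ∀ p : MvPolynomial (Fin m) ℚ, p.totalDegree ≤ k →
      (∀ y ∈ coneAt v Λ, f v y = evalR p y) →
      ∀ P' ∈ C'.polys, v' ∈ P' → P' ⊆ Λ → ∀ y ∈ coneAt v' P',
        f' v' y = evalR p ((y + v') - v))

/-- The piecewise linear function `φ_{v,γ}` attached at the vertex `v` to the edge `γ`
towards the vertex `w`: linear on the cones of `Π(v)`, vanishing on cones of polyhedra
not containing `w`, normalized on the ray towards `w`. -/
def IsRayFunAt {m : ℕ} (C : PolyComplex m) (v w : Fin m → ℝ)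
    (φ : (Fin m → ℝ) → ℝ) : Prop :=
  (∀ P ∈ C.polys, v ∈ P → ∃ ℓ : (Fin m → ℝ) →ₗ[ℝ] ℝ, ∀ y ∈ coneAt v P, φ y = ℓ y) ∧
  (∀ P ∈ C.polys, v ∈ P → w ∉ P → ∀ y ∈ coneAt v P, φ y = 0) ∧
  (∃ c : ℝ, 0 < c ∧ φ (c • (w - v)) = 1)

/-- `g = -γρ(f)`: the characterization of the composite map `-γρ` in terms of
representing polynomials, following the explicit formula of the pushforward and pullback
maps: `(-γρ f)_v = Σ_γ (u_{v,γ*} u_{v_γ,γ}^* f_{v_γ} - φ_{v,γ} f_v)`. -/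
def IsMinusGammaRho {m : ℕ} (C : PolyComplex m) (k : ℕ)
    (φ : (Fin m → ℝ) → (Fin m → ℝ) → ((Fin m → ℝ) → ℝ))
    (f g : (Fin m → ℝ) → ((Fin m → ℝ) → ℝ)) : Prop :=
  ∀ v ∈ C.vtx, ∀ P ∈ C.polys, FullDim P → v ∈ P →
    ∀ q : (Fin m → ℝ) → MvPolynomial (Fin m) ℚ,
      (∀ u ∈ C.vtx, u ∈ P →
        (q u).totalDegree ≤ k ∧ ∀ y ∈ coneAt u P, f u y = evalR (q u) y) →
      ∀ y ∈ coneAt v P,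
        g v y = ∑ᶠ w ∈ {w | w ∈ C.vtx ∧ w ≠ v ∧ segment ℝ v w ∈ C.polys ∧
                            segment ℝ v w ⊆ P},
          φ v w y * (evalR (q w) ((y + v) - w) - evalR (q v) y)


section Alg
open MvPolynomial
variable {n : ℕ}


lemma evalR_eq (p : MvPolynomial (Fin n) ℚ) (x : Fin n → ℝ) :
    evalR p x = aeval x p := by
  rw [evalR, MvPolynomial.eval_map]; rfl

@[simp] lemma evalR_add (p q : MvPolynomial (Fin n) ℚ) (x) :
    evalR (p + q) x = evalR p x + evalR q x := by simp [evalR_eq]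

@[simp] lemma evalR_mul (p q : MvPolynomial (Fin n) ℚ) (x) :
    evalR (p * q) x = evalR p x * evalR q x := by simp [evalR_eq]

@[simp] lemma evalR_sub (p q : MvPolynomial (Fin n) ℚ) (x) :
    evalR (p - q) x = evalR p x - evalR q x := by simp [evalR_eq]

@[simp] lemma evalR_zero (x : Fin n → ℝ) : evalR 0 x = 0 := by simp [evalR_eq]

@[simp] lemma evalR_C (c : ℚ) (x : Fin n → ℝ) : evalR (C c) x = (c : ℝ) := by
  simp [evalR_eq]

@[simp] lemma evalR_X (i : Fin n) (x : Fin n → ℝ) : evalR (X i) x = x i := by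
  simp [evalR_eq]

lemma evalR_sum {α : Type*} (s : Finset α) (f : α → MvPolynomial (Fin n) ℚ) (x) :
    evalR (∑ a ∈ s, f a) x = ∑ a ∈ s, evalR (f a) x := by
  simp [evalR_eq]

lemma evalR_prod {α : Type*} (s : Finset α) (f : α → MvPolynomial (Fin n) ℚ) (x) :
    evalR (∏ a ∈ s, f a) x = ∏ a ∈ s, evalR (f a) x := by
  simp [evalR_eq]

/-- Composition of evaluation with polynomial substitution. -/
lemma evalR_aeval (g : Fin n → MvPolynomial (Fin n) ℚ) (q : MvPolynomial (Fin n) ℚ)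
    (y : Fin n → ℝ) :
    evalR (aeval g q) y = evalR q (fun i => evalR (g i) y) := by
  simp only [evalR_eq]
  have : (aeval g q : MvPolynomial (Fin n) ℚ) = bind₁ g q := rfl
  rw [this, aeval_bind₁]

/-- If a polynomial over `ℝ` vanishes on the orthant where coordinates in `t` are
nonnegative, it is zero. -/
lemma eq_zero_of_vanish_orthant (t : Finset (Fin n)) (p : MvPolynomial (Fin n) ℝ)
    (h : ∀ y : Fin n → ℝ, (∀ k ∈ t, 0 ≤ y k) → eval y p = 0) : p = 0 := by
  classical
  set f : Fin n → MvPolynomial (Fin n) ℝ := fun k => if k ∈ t then X k * X k else X k with hf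
  -- the substituted polynomial
  set q : MvPolynomial (Fin n) ℝ := bind₁ f p with hq
  have hmono : ∀ m : Fin n →₀ ℕ, (m + m.filter (· ∈ t)).support = m.support := by
    intro m
    ext k
    simp only [Finsupp.mem_support_iff, Finsupp.add_apply, Finsupp.filter_apply]
    constructor
    · intro hk h0; apply hk; simp [h0]
    · intro hk h
      exact absurd (Nat.eq_zero_of_add_eq_zero_right h) hk
  have key : q = ∑ m ∈ p.support, monomial (m + m.filter (· ∈ t)) (p.coeff m) := by
    conv_lhs => rw [hq, ← support_sum_monomial_coeff p]
    rw [map_sum]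
    refine Finset.sum_congr rfl fun m _ => ?_
    rw [bind₁_monomial]
    have hprod : (∏ k ∈ m.support, f k ^ m k)
        = ∏ k ∈ m.support, X k ^ ((m + m.filter (· ∈ t)) k) := by
      refine Finset.prod_congr rfl fun k _ => ?_
      by_cases hk : k ∈ t
      · simp [hf, hk, Finsupp.add_apply, Finsupp.filter_apply, ← pow_mul, two_mul, pow_add, mul_pow]
      · simp [hf, hk, Finsupp.add_apply, Finsupp.filter_apply]
    rw [hprod, monomial_eq]
    congr 1
    rw [Finsupp.prod]
    rw [hmono m]
  have hinj : ∀ m m' : Fin n →₀ ℕ,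
      m + m.filter (· ∈ t) = m' + m'.filter (· ∈ t) → m = m' := by
    intro m m' hmm
    ext k
    have := congrArg (fun g : Fin n →₀ ℕ => g k) hmm
    simp only [Finsupp.add_apply, Finsupp.filter_apply] at this
    by_cases hk : k ∈ t <;> simp [hk] at this <;> omega
  have hq0 : q = 0 := by
    apply MvPolynomial.funext
    intro z
    have hz : eval z q = eval (fun k => eval z (f k)) p := by
      rw [hq]
      show eval₂Hom (RingHom.id ℝ) z (bind₁ f p) = _
      rw [eval₂Hom_bind₁]
      rfl
    rw [hz, map_zero]
    apply h
    intro k hk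
    simp only [hf]
    rw [if_pos hk]
    simp only [map_mul, eval_X]
    exact mul_self_nonneg _
  -- compare coefficients
  ext m
  by_cases hm : m ∈ p.support
  · have : coeff (m + m.filter (· ∈ t)) q = p.coeff m := by
      rw [key, coeff_sum]
      rw [Finset.sum_eq_single_of_mem m hm]
      · simp [coeff_monomial]
      · intro b _ hbm
        rw [coeff_monomial, if_neg]
        intro hc
        exact hbm (hinj _ _ hc)
    rw [hq0] at this
    simpa using this.symm
  · simpa using hm








/-- Substitute `0` for the variables outside `t`. -/
noncomputable def maskP (t : Finset (Fin n)) (p : MvPolynomial (Fin n) ℚ) :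
    MvPolynomial (Fin n) ℚ :=
  aeval (fun k => if k ∈ t then X k else 0) p

lemma maskP_eq (t : Finset (Fin n)) (p : MvPolynomial (Fin n) ℚ) :
    maskP t p = ∑ m ∈ p.support,
      if m.support ⊆ t then monomial m (coeff m p) else 0 := by
  classical
  have : maskP t p = bind₁ (fun k => if k ∈ t then X k else 0) p := rfl
  rw [this]
  conv_lhs => rw [← support_sum_monomial_coeff p]
  rw [map_sum]
  refine Finset.sum_congr rfl fun m _ => ?_
  rw [bind₁_monomial]
  by_cases hsub : m.support ⊆ t
  · rw [if_pos hsub]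
    have : (∏ k ∈ m.support, (if k ∈ t then (X k : MvPolynomial (Fin n) ℚ) else 0) ^ m k)
        = ∏ k ∈ m.support, (X k : MvPolynomial (Fin n) ℚ) ^ m k := by
      refine Finset.prod_congr rfl fun k hk => ?_
      rw [if_pos (hsub hk)]
    rw [this, monomial_eq, Finsupp.prod]
  · rw [if_neg hsub]
    obtain ⟨k, hk, hkt⟩ : ∃ k ∈ m.support, k ∉ t := by
      by_contra hc; push_neg at hc; exact hsub hc
    rw [Finset.prod_eq_zero hk, mul_zero]
    rw [if_neg hkt]
    exact zero_pow (by simpa [Finsupp.mem_support_iff] using hk)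

lemma coeff_maskP (t : Finset (Fin n)) (p : MvPolynomial (Fin n) ℚ) (m : Fin n →₀ ℕ) :
    coeff m (maskP t p) = if m.support ⊆ t then coeff m p else 0 := by
  classical
  rw [maskP_eq, coeff_sum]
  by_cases hm : m ∈ p.support
  · rw [Finset.sum_eq_single_of_mem m hm]
    · split_ifs with h
      · simp [coeff_monomial]
      · simp
    · intro b _ hbm
      split_ifs with h
      · rw [coeff_monomial, if_neg hbm]
      · simp
  · have h0 : coeff m p = 0 := notMem_support_iff.mp hm
    rw [Finset.sum_eq_zero]
    · simp [h0]
    · intro b hb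
      split_ifs with h
      · rw [coeff_monomial, if_neg]
        rintro rfl; exact hm hb
      · simp

lemma X_dvd_of_coeff (j : Fin n) (p : MvPolynomial (Fin n) ℚ)
    (h : ∀ m : Fin n →₀ ℕ, m j = 0 → coeff m p = 0) : X j ∣ p := by
  classical
  rw [X_dvd_iff_modMonomial_eq_zero]
  ext m
  rw [coeff_zero]
  by_cases hle : Finsupp.single j 1 ≤ m
  · exact coeff_modMonomial_of_le _ hle
  · rw [coeff_modMonomial_of_not_le _ hle]
    apply h
    by_contra hmj
    exact hle (Finsupp.single_le_iff.mpr (by omega))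

lemma prod_X_dvd_of_coeff (s : Finset (Fin n)) (p : MvPolynomial (Fin n) ℚ)
    (h : ∀ m : Fin n →₀ ℕ, (∃ j ∈ s, m j = 0) → coeff m p = 0) :
    (∏ j ∈ s, X j : MvPolynomial (Fin n) ℚ) ∣ p := by
  classical
  induction s using Finset.induction_on generalizing p with
  | empty => simpa using one_dvd p
  | @insert a t ha ih =>
    obtain ⟨q, rfl⟩ : X a ∣ p := by
      apply X_dvd_of_coeff
      intro m hma
      exact h m ⟨a, Finset.mem_insert_self a t, hma⟩
    rw [Finset.prod_insert ha]
    refine mul_dvd_mul_left _ (ih q fun m hm => ?_)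
    obtain ⟨j, hj, hmj⟩ := hm
    have : coeff (Finsupp.single a 1 + m) (X a * q) = coeff m q := coeff_X_mul m a q
    rw [← this]
    apply h
    refine ⟨j, Finset.mem_insert_of_mem hj, ?_⟩
    have : j ≠ a := fun hja => ha (hja ▸ hj)
    simp [Finsupp.single_apply, this.symm, hmj]

lemma exists_linear_poly (ℓ : (Fin n → ℝ) →ₗ[ℝ] ℝ) (q : Fin n → ℚ)
    (hq : ∀ i, ℓ (Pi.single i 1) = (q i : ℝ)) :
    ∃ p : MvPolynomial (Fin n) ℚ, ∀ x, evalR p x = ℓ x := by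
  classical
  refine ⟨∑ i, C (q i) * X i, fun x => ?_⟩
  rw [evalR_sum]
  have hx : x = ∑ i, x i • (Pi.single i (1:ℝ) : Fin n → ℝ) := by
    funext j
    simp [Pi.single_apply, Finset.sum_apply]
  calc ∑ i, evalR (C (q i) * X i) x = ∑ i, (q i : ℝ) * x i := by
        refine Finset.sum_congr rfl fun i _ => by simp
    _ = ℓ x := by
        conv_rhs => rw [hx]
        rw [map_sum]
        refine (Finset.sum_congr rfl fun i _ => ?_).symm
        rw [map_smul, hq i, smul_eq_mul, mul_comm]



end Alg

section Geo
open MvPolynomial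

variable {n : ℕ}

lemma ι_injective : Function.Injective (ι (m := n)) := by
  intro v w h
  funext i
  have := congrFun h i
  simpa [ι] using this

lemma ι_add (v w : Fin n → ℤ) : ι (v + w) = ι v + ι w := by
  funext i; simp [ι]

lemma ι_zsmul (c : ℤ) (v : Fin n → ℤ) : ι (c • v) = (c : ℝ) • ι v := by
  funext i; simp [ι]

lemma ι_sum {α : Type*} (s : Finset α) (f : α → (Fin n → ℤ)) :
    ι (∑ a ∈ s, f a) = ∑ a ∈ s, ι (f a) := by
  funext i
  simp [ι, Finset.sum_apply]

lemma ι_single (i : Fin n) : ι (Pi.single i (1 : ℤ)) = Pi.single i (1 : ℝ) := by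
  funext j
  rcases eq_or_ne j i with rfl | hj
  · simp [ι]
  · simp [ι, Pi.single_apply, hj]

lemma basR_span (b : Module.Basis (Fin n) ℤ (Fin n → ℤ)) :
    ⊤ ≤ Submodule.span ℝ (Set.range fun j => ι (b j)) := by
  rw [← (Pi.basisFun ℝ (Fin n)).span_eq]
  apply Submodule.span_le.mpr
  rintro _ ⟨i, rfl⟩
  rw [Pi.basisFun_apply, ← ι_single]
  have hi : (Pi.single i (1 : ℤ)) = ∑ j, b.repr (Pi.single i 1) j • b j :=
    (b.sum_repr _).symm
  rw [hi, ι_sum]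
  apply Submodule.sum_mem
  intro j _
  rw [ι_zsmul]
  exact Submodule.smul_mem _ _ (Submodule.subset_span ⟨j, rfl⟩)

/-- The `ℝ`-basis of `ℝ^n` obtained from a `ℤ`-basis of `ℤ^n`. -/
noncomputable def basR (b : Module.Basis (Fin n) ℤ (Fin n → ℤ)) : Module.Basis (Fin n) ℝ (Fin n → ℝ) :=
  basisOfTopLeSpanOfCardEqFinrank (fun j => ι (b j)) (basR_span b)
    (by simp [Module.finrank_pi])

@[simp] lemma basR_apply (b : Module.Basis (Fin n) ℤ (Fin n → ℤ)) (j : Fin n) :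
    basR b j = ι (b j) := by
  have := coe_basisOfTopLeSpanOfCardEqFinrank (fun j => ι (b j)) (basR_span b)
    (by simp [Module.finrank_pi] :
      Fintype.card (Fin n) = Module.finrank ℝ (Fin n → ℝ))
  exact congrFun this j

lemma basR_repr (b : Module.Basis (Fin n) ℤ (Fin n → ℤ)) (w : Fin n → ℤ) (j : Fin n) :
    (basR b).repr (ι w) j = ((b.repr w j : ℤ) : ℝ) := by
  have hw : ι w = ∑ j, ((b.repr w j : ℤ) : ℝ) • basR b j := by
    conv_lhs => rw [← b.sum_repr w]
    rw [ι_sum]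
    refine Finset.sum_congr rfl fun j _ => ?_
    rw [ι_zsmul, basR_apply]
  rw [hw]
  rw [Module.Basis.repr_sum_self]

/-! ### coneOf basics -/

lemma zero_mem_coneOf (s : Finset (Fin n → ℝ)) : (0 : Fin n → ℝ) ∈ coneOf s :=
  ⟨fun _ => 0, fun _ => le_refl 0, by simp⟩

lemma smul_mem_coneOf {s : Finset (Fin n → ℝ)} {x : Fin n → ℝ} {c : ℝ} (hc : 0 ≤ c)
    (hx : x ∈ coneOf s) : c • x ∈ coneOf s := by
  obtain ⟨a, ha, rfl⟩ := hx
  refine ⟨fun v => c * a v, fun v => mul_nonneg hc (ha v), ?_⟩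
  rw [Finset.smul_sum]
  refine Finset.sum_congr rfl fun v _ => ?_
  show c • a v • v = (c * a v) • v
  rw [smul_smul]

lemma add_mem_coneOf {s : Finset (Fin n → ℝ)} {x y : Fin n → ℝ}
    (hx : x ∈ coneOf s) (hy : y ∈ coneOf s) : x + y ∈ coneOf s := by
  obtain ⟨a, ha, rfl⟩ := hx
  obtain ⟨b, hb, rfl⟩ := hy
  exact ⟨fun v => a v + b v, fun v => add_nonneg (ha v) (hb v),
    by rw [← Finset.sum_add_distrib]; exact Finset.sum_congr rfl fun v _ => (add_smul _ _ _).symm⟩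

lemma mem_coneOf_self {s : Finset (Fin n → ℝ)} {v : Fin n → ℝ} (hv : v ∈ s) :
    v ∈ coneOf s := by
  classical
  refine ⟨fun w => if w = v then 1 else 0, fun w => by positivity, ?_⟩
  rw [Finset.sum_eq_single_of_mem v hv]
  · simp
  · intro b _ hbv
    simp [hbv]

lemma coneOf_image (g : Fin n → (Fin n → ℝ)) (s : Finset (Fin n))
    (hg : Set.InjOn g s) :
    coneOf (s.image g) =
      {x | ∃ d : Fin n → ℝ, (∀ j, 0 ≤ d j) ∧ x = ∑ j ∈ s, d j • g j} := by
  classical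
  ext x
  constructor
  · rintro ⟨c, hc, rfl⟩
    refine ⟨fun j => c (g j), fun j => hc _, ?_⟩
    rw [Finset.sum_image fun a ha b hb hab => hg ha hb hab]
  · rintro ⟨d, hd, rfl⟩
    refine ⟨fun v => if h : ∃ j, j ∈ s ∧ g j = v then d h.choose else 0, ?_, ?_⟩
    · intro v
      dsimp only
      by_cases h : ∃ j, j ∈ s ∧ g j = v
      · rw [dif_pos h]; exact hd _
      · rw [dif_neg h]
    · rw [Finset.sum_image fun a ha b hb hab => hg ha hb hab]
      refine Finset.sum_congr rfl fun j hj => ?_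
      have hex : ∃ j', j' ∈ s ∧ g j' = g j := ⟨j, hj, rfl⟩
      dsimp only
      rw [dif_pos hex]
      have hsp := hex.choose_spec
      have hj' : hex.choose = j := hg hsp.1 hj hsp.2
      rw [hj']

end Geo

section FanSec
open MvPolynomial

variable {n : ℕ}

/-- The real basis attached to a cone by the choice functions. -/
noncomputable def EC (bC : Set (Fin n → ℝ) → Module.Basis (Fin n) ℤ (Fin n → ℤ))
    (σ : Set (Fin n → ℝ)) : Module.Basis (Fin n) ℝ (Fin n → ℝ) := basR (bC σ)

variable (F : Fan n) (bC : Set (Fin n → ℝ) → Module.Basis (Fin n) ℤ (Fin n → ℤ))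
    (sC : Set (Fin n → ℝ) → Finset (Fin n))

/-- The choice functions describe each cone of the fan. -/
def GoodChoice : Prop :=
  ∀ σ ∈ F.cones, σ = coneOf ((sC σ).image fun j => ι (bC σ j))

variable {F bC sC}

lemma mem_cone_iff (hspec : GoodChoice F bC sC) {σ : Set (Fin n → ℝ)}
    (hσ : σ ∈ F.cones) (x : Fin n → ℝ) :
    x ∈ σ ↔ (∀ j, 0 ≤ (EC bC σ).repr x j) ∧ (∀ j ∉ sC σ, (EC bC σ).repr x j = 0) := by
  classical
  have himg : (sC σ).image (fun j => ι (bC σ j)) = (sC σ).image (fun j => EC bC σ j) := by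
    refine Finset.image_congr fun j _ => ?_
    rw [EC, basR_apply]
  have hinj : Set.InjOn (fun j => EC bC σ j) (sC σ) :=
    fun a _ b _ hab => (EC bC σ).injective hab
  have hmem : x ∈ σ ↔ ∃ d : Fin n → ℝ, (∀ j, 0 ≤ d j) ∧ x = ∑ j ∈ sC σ, d j • EC bC σ j := by
    conv_lhs => rw [hspec σ hσ]
    rw [himg, coneOf_image _ _ hinj]
    rfl
  rw [hmem]
  constructor
  · rintro ⟨d, hd, rfl⟩
    set c : Fin n → ℝ := fun j => if j ∈ sC σ then d j else 0 with hc
    have hA : ∑ j ∈ sC σ, c j • EC bC σ j = ∑ j, c j • EC bC σ j :=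
      Finset.sum_subset (Finset.subset_univ _) (fun j _ hj => by simp [hc, hj])
    have hB : ∑ j ∈ sC σ, d j • EC bC σ j = ∑ j ∈ sC σ, c j • EC bC σ j :=
      Finset.sum_congr rfl fun j hj => by simp [hc, hj]
    rw [hB, hA, Module.Basis.repr_sum_self]
    constructor
    · intro j
      rw [hc]
      dsimp only
      split
      · exact hd j
      · exact le_refl 0
    · intro j hj
      rw [hc]; simp [hj]
  · rintro ⟨h1, h2⟩
    refine ⟨fun j => (EC bC σ).repr x j, h1, ?_⟩
    conv_lhs => rw [← (EC bC σ).sum_repr x]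
    rw [Finset.sum_subset (Finset.subset_univ (sC σ))]
    intro j _ hj
    dsimp only
    rw [h2 j hj, zero_smul]

lemma gen_mem_cone (hspec : GoodChoice F bC sC) {σ : Set (Fin n → ℝ)}
    (hσ : σ ∈ F.cones) {j : Fin n} (hj : j ∈ sC σ) : EC bC σ j ∈ σ := by
  rw [mem_cone_iff hspec hσ]
  refine ⟨fun k => ?_, fun k hk => ?_⟩
  · rw [Module.Basis.repr_self, Finsupp.single_apply]
    split <;> norm_num
  · rw [Module.Basis.repr_self, Finsupp.single_apply, if_neg]
    intro h; exact hk (h ▸ hj)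

lemma repr_gen_zero_of_face (hspec : GoodChoice F bC sC) {σ : Set (Fin n → ℝ)}
    (hσ : σ ∈ F.cones) {u : (Fin n → ℝ) →ₗ[ℝ] ℝ} (hu : ∀ y ∈ σ, 0 ≤ u y)
    {x : Fin n → ℝ} (hx : x ∈ σ) (hux : u x = 0) {j : Fin n}
    (hj : (EC bC σ).repr x j ≠ 0) : EC bC σ j ∈ σ ∧ u (EC bC σ j) = 0 := by
  classical
  obtain ⟨h1, h2⟩ := (mem_cone_iff hspec hσ x).mp hx
  have hjs : j ∈ sC σ := by
    by_contra hjs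
    exact hj (h2 j hjs)
  have hxsum : x = ∑ k ∈ sC σ, (EC bC σ).repr x k • EC bC σ k := by
    conv_lhs => rw [← (EC bC σ).sum_repr x]
    rw [Finset.sum_subset (Finset.subset_univ (sC σ))]
    intro k _ hk
    rw [h2 k hk, zero_smul]
  have hsum0 : ∑ k ∈ sC σ, (EC bC σ).repr x k * u (EC bC σ k) = 0 := by
    have : u x = ∑ k ∈ sC σ, (EC bC σ).repr x k * u (EC bC σ k) := by
      conv_lhs => rw [hxsum]
      rw [map_sum]
      exact Finset.sum_congr rfl fun k _ => by rw [map_smul, smul_eq_mul]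
    rw [← this, hux]
  have hterm : ∀ k ∈ sC σ, (EC bC σ).repr x k * u (EC bC σ k) = 0 :=
    (Finset.sum_eq_zero_iff_of_nonneg fun k hk =>
      mul_nonneg (h1 k) (hu _ (gen_mem_cone hspec hσ hk))).mp hsum0
  have := hterm j hjs
  rcases mul_eq_zero.mp this with h | h
  · exact absurd h hj
  · exact ⟨gen_mem_cone hspec hσ hjs, h⟩

lemma sum_mem_coneOf {α : Type*} {t : Finset (Fin n → ℝ)} (s : Finset α)
    (f : α → (Fin n → ℝ)) (h : ∀ a ∈ s, f a ∈ coneOf t) :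
    ∑ a ∈ s, f a ∈ coneOf t := by
  classical
  induction s using Finset.induction_on with
  | empty => simpa using zero_mem_coneOf t
  | @insert a s ha ih =>
    rw [Finset.sum_insert ha]
    exact add_mem_coneOf (h a (Finset.mem_insert_self a s))
      (ih fun b hb => h b (Finset.mem_insert_of_mem hb))

lemma smul_mem_cone (hspec : GoodChoice F bC sC) {σ : Set (Fin n → ℝ)}
    (hσ : σ ∈ F.cones) {x : Fin n → ℝ} (hx : x ∈ σ) {c : ℝ} (hc : 0 ≤ c) :
    c • x ∈ σ := by
  rw [hspec σ hσ] at hx ⊢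
  exact smul_mem_coneOf hc hx

lemma subset_of_gens_mem (hspec : GoodChoice F bC sC) {σ τ : Set (Fin n → ℝ)}
    (hσ : σ ∈ F.cones) (hτ : τ ∈ F.cones)
    (h : ∀ j ∈ sC σ, EC bC σ j ∈ τ) : σ ⊆ τ := by
  intro x hx
  obtain ⟨h1, h2⟩ := (mem_cone_iff hspec hσ x).mp hx
  have hxsum : x = ∑ k ∈ sC σ, (EC bC σ).repr x k • EC bC σ k := by
    conv_lhs => rw [← (EC bC σ).sum_repr x]
    rw [Finset.sum_subset (Finset.subset_univ (sC σ))]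
    intro k _ hk
    rw [h2 k hk, zero_smul]
  rw [hxsum, hspec τ hτ]
  refine sum_mem_coneOf _ _ fun k hk => ?_
  have : EC bC σ k ∈ coneOf ((sC τ).image fun j => ι (bC τ j)) := by
    rw [← hspec τ hτ]; exact h k hk
  exact smul_mem_coneOf (h1 k) this

/-- The ray generated by the `j`-th generator of a cone is again a cone of the fan. -/
lemma ray_mem_cones (hspec : GoodChoice F bC sC) {σ : Set (Fin n → ℝ)}
    (hσ : σ ∈ F.cones) {j : Fin n} (hj : j ∈ sC σ) :
    {y | ∃ c : ℝ, 0 ≤ c ∧ y = c • EC bC σ j} ∈ F.cones ∧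
      IsFaceOfCone {y | ∃ c : ℝ, 0 ≤ c ∧ y = c • EC bC σ j} σ := by
  classical
  set E := EC bC σ
  set u : (Fin n → ℝ) →ₗ[ℝ] ℝ := ∑ k ∈ (sC σ).erase j, E.coord k with hu
  have huval : ∀ y, u y = ∑ k ∈ (sC σ).erase j, E.repr y k := by
    intro y
    rw [hu]
    rw [LinearMap.coe_sum, Finset.sum_apply]
    exact Finset.sum_congr rfl fun k _ => by rw [Module.Basis.coord_apply]
  have hupos : ∀ y ∈ σ, 0 ≤ u y := by
    intro y hy
    obtain ⟨h1, _⟩ := (mem_cone_iff hspec hσ y).mp hy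
    rw [huval]
    exact Finset.sum_nonneg fun k _ => h1 k
  have hface : IsFaceOfCone {y | ∃ c : ℝ, 0 ≤ c ∧ y = c • E j} σ := by
    refine ⟨u, hupos, ?_⟩
    ext y
    constructor
    · rintro ⟨c, hc, rfl⟩
      have hyσ : c • E j ∈ σ := smul_mem_cone hspec hσ (gen_mem_cone hspec hσ hj) hc
      refine ⟨hyσ, ?_⟩
      rw [huval]
      refine Finset.sum_eq_zero fun k hk => ?_
      have hkj : k ≠ j := Finset.ne_of_mem_erase hk
      rw [map_smul]
      rw [Module.Basis.repr_self]
      simp only [Finsupp.smul_single, smul_eq_mul, mul_one, Finsupp.single_apply]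
      rw [if_neg (fun h => hkj h.symm)]
    · rintro ⟨hyσ, huy⟩
      obtain ⟨h1, h2⟩ := (mem_cone_iff hspec hσ y).mp hyσ
      rw [huval] at huy
      have hzero : ∀ k ∈ (sC σ).erase j, E.repr y k = 0 :=
        (Finset.sum_eq_zero_iff_of_nonneg fun k _ => h1 k).mp huy
      refine ⟨E.repr y j, h1 j, ?_⟩
      conv_lhs => rw [← E.sum_repr y]
      rw [Finset.sum_eq_single_of_mem j (Finset.mem_univ j)]
      intro k _ hkj
      by_cases hks : k ∈ sC σ
      · rw [hzero k (Finset.mem_erase.mpr ⟨hkj, hks⟩), zero_smul]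
      · rw [h2 k hks, zero_smul]
  exact ⟨F.face_mem σ hσ _ hface, hface⟩

/-- Primitive generators agree across cones: if a generator of `σ` lies in `σ'`, it is a
generator of `σ'`. -/
lemma gen_eq_gen (hspec : GoodChoice F bC sC) {σ σ' : Set (Fin n → ℝ)}
    (hσ : σ ∈ F.cones) (hσ' : σ' ∈ F.cones) {j : Fin n} (hj : j ∈ sC σ)
    (hmem : EC bC σ j ∈ σ') : ∃ k ∈ sC σ', EC bC σ' k = EC bC σ j := by
  classical
  set v := EC bC σ j with hv
  obtain ⟨hρ, _⟩ := ray_mem_cones hspec hσ hj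
  set ρ : Set (Fin n → ℝ) := {y | ∃ c : ℝ, 0 ≤ c ∧ y = c • v} with hρdef
  have hsub : ρ ⊆ σ' := by
    rintro y ⟨c, hc, rfl⟩
    exact smul_mem_cone hspec hσ' hmem hc
  have hface : IsFaceOfCone ρ σ' := by
    have := (F.inter_face ρ hρ σ' hσ').2
    rwa [Set.inter_eq_self_of_subset_left hsub] at this
  obtain ⟨u', hu', hρeq⟩ := hface
  have hvρ : v ∈ ρ := ⟨1, zero_le_one, (one_smul ℝ v).symm⟩
  have hvσ' : v ∈ σ' := hsub hvρ
  have hvu' : u' v = 0 := by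
    have := hρeq ▸ hvρ
    exact this.2
  have hvne : v ≠ 0 := Module.Basis.ne_zero _ j
  obtain ⟨k, hk⟩ : ∃ k, (EC bC σ').repr v k ≠ 0 := by
    by_contra hc
    push_neg at hc
    apply hvne
    have : (EC bC σ').repr v = 0 := Finsupp.ext hc
    have := congrArg ((EC bC σ').repr.symm) this
    simpa using this
  have hks : k ∈ sC σ' := by
    by_contra hks
    exact hk (((mem_cone_iff hspec hσ' v).mp hvσ').2 k hks)
  obtain ⟨hEkσ', hEku'⟩ := repr_gen_zero_of_face hspec hσ' hu' hvσ' hvu' hk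
  have hEkρ : EC bC σ' k ∈ ρ := by
    rw [hρeq]; exact ⟨hEkσ', hEku'⟩
  obtain ⟨c, hc, hEk⟩ := hEkρ
  have hcne : c ≠ 0 := by
    intro h
    exact Module.Basis.ne_zero (EC bC σ') k (by rw [hEk, h, zero_smul])
  -- integrality: c is a positive integer whose inverse is also an integer
  have hz : ((bC σ').repr (bC σ j) k : ℝ) = c⁻¹ := by
    have hvrepr : v = c⁻¹ • EC bC σ' k := by
      rw [hEk, smul_smul, inv_mul_cancel₀ hcne, one_smul]
    have h2 : (EC bC σ').repr v k = c⁻¹ := by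
      rw [hvrepr, map_smul, Module.Basis.repr_self]
      simp
    have h3 : (EC bC σ').repr v k = ((bC σ').repr (bC σ j) k : ℝ) := by
      rw [hv]
      simp only [EC]
      rw [basR_apply]
      exact basR_repr _ _ _
    rw [← h3, h2]
  have hz' : ((bC σ).repr (bC σ' k) j : ℝ) = c := by
    have h2 : (EC bC σ).repr (EC bC σ' k) j = c := by
      rw [hEk, map_smul, Module.Basis.repr_self]
      simp
    have h3 : (EC bC σ).repr (EC bC σ' k) j = ((bC σ).repr (bC σ' k) j : ℝ) := by
      simp only [EC]
      rw [basR_apply]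
      exact basR_repr _ _ _
    rw [← h3, h2]
  set z : ℤ := (bC σ').repr (bC σ j) k
  set z' : ℤ := (bC σ).repr (bC σ' k) j
  have hzz' : (z' : ℝ) * (z : ℝ) = 1 := by
    rw [hz, hz']
    exact mul_inv_cancel₀ hcne
  have hzz'int : z' * z = 1 := by
    exact_mod_cast hzz'
  have hcpos : 0 < c := lt_of_le_of_ne hc (Ne.symm hcne)
  have hz'posZ : 0 < z' := by
    have : (0:ℝ) < (z' : ℝ) := by rw [hz']; exact hcpos
    exact_mod_cast this
  have hz'one : z' = 1 := by
    rcases Int.mul_eq_one_iff_eq_one_or_neg_one.mp hzz'int with ⟨h, _⟩ | ⟨h, _⟩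
    · exact h
    · omega
  have : c = 1 := by
    rw [← hz', hz'one]; norm_num
  exact ⟨k, hks, by rw [hEk, this, one_smul]⟩

end FanSec

section FanSec2
open MvPolynomial

variable {n : ℕ} {F : Fan n} {bC : Set (Fin n → ℝ) → Module.Basis (Fin n) ℤ (Fin n → ℤ)}
    {sC : Set (Fin n → ℝ) → Finset (Fin n)}

/-- If `x ∈ σ ∩ σ'` and a coordinate of `x` in `σ` does not vanish, the corresponding
generator belongs to `σ ∩ σ'`. -/
lemma gen_mem_of_repr_ne_zero (hspec : GoodChoice F bC sC) {σ σ' : Set (Fin n → ℝ)}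
    (hσ : σ ∈ F.cones) (hσ' : σ' ∈ F.cones) {x : Fin n → ℝ} (hx : x ∈ σ) (hx' : x ∈ σ')
    {j : Fin n} (hj : (EC bC σ).repr x j ≠ 0) : EC bC σ j ∈ σ' := by
  obtain ⟨u, hu, hfeq⟩ := (F.inter_face σ hσ σ' hσ').1
  have hxf : x ∈ σ ∩ σ' := ⟨hx, hx'⟩
  have hux : u x = 0 := by
    rw [hfeq] at hxf
    exact hxf.2
  have := repr_gen_zero_of_face hspec hσ hu hx hux hj
  have hmem : EC bC σ j ∈ σ ∩ σ' := by
    rw [hfeq]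
    exact ⟨this.1, this.2⟩
  exact hmem.2

/-- Core compatibility: the coordinates of a common point with respect to two cones match
up along equal generators. -/
lemma repr_compat (hspec : GoodChoice F bC sC) {σ σ' : Set (Fin n → ℝ)}
    (hσ : σ ∈ F.cones) (hσ' : σ' ∈ F.cones) {x : Fin n → ℝ} (hx : x ∈ σ) (hx' : x ∈ σ')
    {k : Fin n} (hk : k ∈ sC σ') :
    (EC bC σ').repr x k
      = ∑ j ∈ (sC σ).filter (fun j => EC bC σ j = EC bC σ' k), (EC bC σ).repr x j := by
  classical
  haveI : Nonempty (Fin n) := ⟨k⟩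
  obtain ⟨h1, h2⟩ := (mem_cone_iff hspec hσ x).mp hx
  have hgen : ∀ j, j ∈ (sC σ).filter (fun j => (EC bC σ).repr x j ≠ 0) →
      ∃ k' ∈ sC σ', EC bC σ' k' = EC bC σ j := by
    intro j hj
    rw [Finset.mem_filter] at hj
    exact gen_eq_gen hspec hσ hσ' hj.1
      (gen_mem_of_repr_ne_zero hspec hσ hσ' hx hx' hj.2)
  choose! κ hκs hκe using hgen
  have hxJ : x = ∑ j ∈ (sC σ).filter (fun j => (EC bC σ).repr x j ≠ 0),
      (EC bC σ).repr x j • EC bC σ j := by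
    have hvan : ∀ j ∈ Finset.univ,
        j ∉ (sC σ).filter (fun j => (EC bC σ).repr x j ≠ 0) →
        (EC bC σ).repr x j • EC bC σ j = 0 := by
      intro j _ hj
      by_cases hjs : j ∈ sC σ
      · have : (EC bC σ).repr x j = 0 := by
          by_contra hne
          exact hj (Finset.mem_filter.mpr ⟨hjs, hne⟩)
        rw [this, zero_smul]
      · rw [h2 j hjs, zero_smul]
    rw [Finset.sum_subset (Finset.subset_univ _) hvan, (EC bC σ).sum_repr x]
  have hrepr : (EC bC σ').repr x k
      = ∑ j ∈ (sC σ).filter (fun j => (EC bC σ).repr x j ≠ 0),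
          (EC bC σ).repr x j * (if κ j = k then 1 else 0) := by
    conv_lhs => rw [hxJ]
    rw [map_sum, Finsupp.coe_finset_sum, Finset.sum_apply]
    refine Finset.sum_congr rfl fun j hj => ?_
    rw [← hκe j hj, map_smul, Module.Basis.repr_self]
    rw [Finsupp.smul_apply, Finsupp.single_apply, smul_eq_mul]
  rw [hrepr]
  have hA : ∑ j ∈ (sC σ).filter (fun j => (EC bC σ).repr x j ≠ 0),
        (EC bC σ).repr x j * (if κ j = k then 1 else 0)
      = ∑ j ∈ ((sC σ).filter (fun j => (EC bC σ).repr x j ≠ 0)).filter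
          (fun j => κ j = k), (EC bC σ).repr x j := by
    conv_rhs => rw [Finset.sum_filter]
    refine Finset.sum_congr rfl fun j _ => ?_
    split <;> ring
  rw [hA]
  have hsub : ((sC σ).filter (fun j => (EC bC σ).repr x j ≠ 0)).filter (fun j => κ j = k)
      ⊆ (sC σ).filter (fun j => EC bC σ j = EC bC σ' k) := by
    intro j hj
    rw [Finset.mem_filter] at hj ⊢
    obtain ⟨hjJ, hjk⟩ := hj
    have hjs : j ∈ sC σ := (Finset.mem_filter.mp hjJ).1
    refine ⟨hjs, ?_⟩
    rw [← hκe j hjJ, hjk]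
  refine Finset.sum_subset hsub ?_
  intro j hj hnj
  rw [Finset.mem_filter] at hj
  by_contra hne
  apply hnj
  have hjJ : j ∈ (sC σ).filter (fun j => (EC bC σ).repr x j ≠ 0) :=
    Finset.mem_filter.mpr ⟨hj.1, hne⟩
  rw [Finset.mem_filter]
  refine ⟨hjJ, ?_⟩
  apply (EC bC σ').injective
  rw [hκe j hjJ, hj.2]

/-- The coordinate functional of a primitive vector `v` on a cone. -/
noncomputable def cval (bC : Set (Fin n → ℝ) → Module.Basis (Fin n) ℤ (Fin n → ℤ))
    (sC : Set (Fin n → ℝ) → Finset (Fin n)) (σ : Set (Fin n → ℝ)) (v : Fin n → ℝ) :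
    (Fin n → ℝ) →ₗ[ℝ] ℝ :=
  if h : ∃ j ∈ sC σ, EC bC σ j = v then (EC bC σ).coord h.choose else 0

lemma cval_gen {σ : Set (Fin n → ℝ)} {j : Fin n} (hj : j ∈ sC σ) :
    cval bC sC σ (EC bC σ j) = (EC bC σ).coord j := by
  have hex : ∃ j' ∈ sC σ, EC bC σ j' = EC bC σ j := ⟨j, hj, rfl⟩
  rw [cval, dif_pos hex]
  have := hex.choose_spec
  have hcj : hex.choose = j := (EC bC σ).injective this.2
  rw [hcj]

lemma cval_not_gen {σ : Set (Fin n → ℝ)} {v : Fin n → ℝ}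
    (h : ¬ ∃ j ∈ sC σ, EC bC σ j = v) : cval bC sC σ v = 0 := dif_neg h

/-- Main compatibility: coordinate functions agree on intersections of cones. -/
lemma cval_compat (hspec : GoodChoice F bC sC) {σ σ' : Set (Fin n → ℝ)}
    (hσ : σ ∈ F.cones) (hσ' : σ' ∈ F.cones) {x : Fin n → ℝ} (hx : x ∈ σ) (hx' : x ∈ σ')
    (v : Fin n → ℝ) : cval bC sC σ v x = cval bC sC σ' v x := by
  classical
  by_cases h : ∃ j ∈ sC σ, EC bC σ j = v
  · obtain ⟨j, hj, hjv⟩ := h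
    by_cases h' : ∃ k ∈ sC σ', EC bC σ' k = v
    · obtain ⟨k, hk, hkv⟩ := h'
      rw [← hjv] at hkv ⊢
      rw [cval_gen hj, ← hkv, cval_gen hk]
      rw [Module.Basis.coord_apply, Module.Basis.coord_apply]
      rw [repr_compat hspec hσ hσ' hx hx' hk]
      rw [Finset.sum_eq_single_of_mem j]
      · rw [Finset.mem_filter]
        exact ⟨hj, hkv.symm⟩
      · intro b hb hbj
        rw [Finset.mem_filter] at hb
        exact absurd ((EC bC σ).injective (hb.2.trans hkv)) hbj
    · rw [cval_not_gen h', LinearMap.zero_apply, ← hjv, cval_gen hj,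
        Module.Basis.coord_apply]
      by_contra hne
      have hmem : EC bC σ j ∈ σ' :=
        gen_mem_of_repr_ne_zero hspec hσ hσ' hx hx' hne
      obtain ⟨k, hk, hke⟩ := gen_eq_gen hspec hσ hσ' hj hmem
      exact h' ⟨k, hk, by rw [hke, hjv]⟩
  · by_cases h' : ∃ k ∈ sC σ', EC bC σ' k = v
    · obtain ⟨k, hk, hkv⟩ := h'
      rw [cval_not_gen h, LinearMap.zero_apply, ← hkv, cval_gen hk,
        Module.Basis.coord_apply]
      rw [repr_compat hspec hσ hσ' hx hx' hk]
      symm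
      apply Finset.sum_eq_zero
      intro j hj
      rw [Finset.mem_filter] at hj
      exact absurd ⟨j, hj.1, hj.2.trans hkv⟩ h
    · rw [cval_not_gen h, cval_not_gen h']

end FanSec2

section RFN
open MvPolynomial
variable {n : ℕ}

open Classical in
/-- The global Courant function attached to a primitive vector `v`. -/
noncomputable def rfn (F : Fan n) (bC : Set (Fin n → ℝ) → Module.Basis (Fin n) ℤ (Fin n → ℤ))
    (sC : Set (Fin n → ℝ) → Finset (Fin n)) (v : Fin n → ℝ) (x : Fin n → ℝ) : ℝ :=
  if h : x ∈ F.supp then cval bC sC (Set.mem_sUnion.mp h).choose v x else 0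

variable {F : Fan n} {bC : Set (Fin n → ℝ) → Module.Basis (Fin n) ℤ (Fin n → ℤ)}
    {sC : Set (Fin n → ℝ) → Finset (Fin n)}

lemma rfn_eq (hspec : GoodChoice F bC sC) {σ : Set (Fin n → ℝ)} (hσ : σ ∈ F.cones)
    {x : Fin n → ℝ} (hx : x ∈ σ) (v : Fin n → ℝ) :
    rfn F bC sC v x = cval bC sC σ v x := by
  have hsupp : x ∈ F.supp := Set.mem_sUnion.mpr ⟨σ, hσ, hx⟩
  rw [rfn, dif_pos hsupp]
  obtain ⟨hσ₀, hx₀⟩ := (Set.mem_sUnion.mp hsupp).choose_spec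
  exact cval_compat hspec hσ₀ hσ hx₀ hx v

end RFN


section PolyRep
open MvPolynomial

variable {n : ℕ}

/-- Coordinates with respect to a rational basis are given by rational polynomials. -/
lemma coord_rat (b : Module.Basis (Fin n) ℤ (Fin n → ℤ)) (j : Fin n) :
    ∃ p : MvPolynomial (Fin n) ℚ, ∀ x, evalR p x = (basR b).coord j x := by
  classical
  have hval : ∀ i, (basR b).coord j (Pi.single i 1)
      = (((b.repr (Pi.single i 1) j : ℤ) : ℚ) : ℝ) := by
    intro i
    rw [Module.Basis.coord_apply, ← ι_single, basR_repr]
    norm_cast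
  exact exists_linear_poly _ (fun i => ((b.repr (Pi.single i 1) j : ℤ) : ℚ)) hval

variable {F : Fan n} {bC : Set (Fin n → ℝ) → Module.Basis (Fin n) ℤ (Fin n → ℤ)}
    {sC : Set (Fin n → ℝ) → Finset (Fin n)}

lemma cval_rat (σ : Set (Fin n → ℝ)) (v : Fin n → ℝ) :
    ∃ p : MvPolynomial (Fin n) ℚ, ∀ x, evalR p x = cval bC sC σ v x := by
  classical
  by_cases h : ∃ j ∈ sC σ, EC bC σ j = v
  · obtain ⟨j, hj, hjv⟩ := h
    rw [← hjv, cval_gen hj]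
    exact coord_rat (bC σ) j
  · rw [cval_not_gen h]
    exact ⟨0, fun x => by simp⟩

lemma rfn_rep (hspec : GoodChoice F bC sC) {σ : Set (Fin n → ℝ)} (hσ : σ ∈ F.cones)
    (v : Fin n → ℝ) :
    ∃ p : MvPolynomial (Fin n) ℚ, ∀ x ∈ σ, rfn F bC sC v x = evalR p x := by
  obtain ⟨p, hp⟩ := cval_rat (bC := bC) (sC := sC) σ v
  exact ⟨p, fun x hx => by rw [rfn_eq hspec hσ hx, hp]⟩

/-- The product generator attached to a cone. -/
noncomputable def gfun (F : Fan n) (bC : Set (Fin n → ℝ) → Module.Basis (Fin n) ℤ (Fin n → ℤ))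
    (sC : Set (Fin n → ℝ) → Finset (Fin n)) (σ : Set (Fin n → ℝ)) (x : Fin n → ℝ) : ℝ :=
  ∏ j ∈ sC σ, rfn F bC sC (EC bC σ j) x

lemma gfun_rep (hspec : GoodChoice F bC sC) (σ : Set (Fin n → ℝ))
    {τ : Set (Fin n → ℝ)} (hτ : τ ∈ F.cones) :
    ∃ p : MvPolynomial (Fin n) ℚ, ∀ x ∈ τ, gfun F bC sC σ x = evalR p x := by
  classical
  have h : ∀ j : Fin n, ∃ p : MvPolynomial (Fin n) ℚ,
      ∀ x ∈ τ, rfn F bC sC (EC bC σ j) x = evalR p x :=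
    fun j => rfn_rep hspec hτ _
  choose ps hps using h
  refine ⟨∏ j ∈ sC σ, ps j, fun x hx => ?_⟩
  rw [gfun, evalR_prod]
  exact Finset.prod_congr rfl fun j _ => hps j x hx

lemma gfun_on_self (hspec : GoodChoice F bC sC) {σ : Set (Fin n → ℝ)}
    (hσ : σ ∈ F.cones) {x : Fin n → ℝ} (hx : x ∈ σ) :
    gfun F bC sC σ x = ∏ j ∈ sC σ, (EC bC σ).repr x j := by
  rw [gfun]
  refine Finset.prod_congr rfl fun j hj => ?_
  rw [rfn_eq hspec hσ hx, cval_gen hj, Module.Basis.coord_apply]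

lemma gfun_vanish (hspec : GoodChoice F bC sC) {σ τ : Set (Fin n → ℝ)}
    (hσ : σ ∈ F.cones) (hτ : τ ∈ F.cones) (hns : ¬ σ ⊆ τ) :
    ∀ x ∈ τ, gfun F bC sC σ x = 0 := by
  intro x hx
  obtain ⟨j, hj, hnot⟩ : ∃ j ∈ sC σ, EC bC σ j ∉ τ := by
    by_contra hc
    push_neg at hc
    exact hns (subset_of_gens_mem hspec hσ hτ hc)
  refine Finset.prod_eq_zero hj ?_
  rw [rfn_eq hspec hτ hx]
  have : ¬ ∃ k ∈ sC τ, EC bC τ k = EC bC σ j := by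
    rintro ⟨k, hk, hke⟩
    exact hnot (hke ▸ gen_mem_cone hspec hτ hk)
  rw [cval_not_gen this]
  rfl

/-! ### Dimension bookkeeping -/

lemma finrank_span_cone (hspec : GoodChoice F bC sC) {σ : Set (Fin n → ℝ)}
    (hσ : σ ∈ F.cones) :
    Module.finrank ℝ (Submodule.span ℝ σ) = (sC σ).card := by
  classical
  have hspan : Submodule.span ℝ σ
      = Submodule.span ℝ (Set.range fun j : (sC σ : Finset (Fin n)) => EC bC σ (j : Fin n)) := by
    apply le_antisymm
    · rw [Submodule.span_le]
      intro x hx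
      obtain ⟨h1, h2⟩ := (mem_cone_iff hspec hσ x).mp hx
      have hxsum : x = ∑ k ∈ sC σ, (EC bC σ).repr x k • EC bC σ k := by
        have hvan : ∀ k ∈ Finset.univ, k ∉ sC σ →
            (EC bC σ).repr x k • EC bC σ k = 0 := by
          intro k _ hk
          rw [h2 k hk, zero_smul]
        rw [Finset.sum_subset (Finset.subset_univ _) hvan, (EC bC σ).sum_repr x]
      rw [hxsum]
      apply Submodule.sum_mem
      intro k hk
      exact Submodule.smul_mem _ _ (Submodule.subset_span ⟨(⟨k, hk⟩ : (sC σ : Finset (Fin n))), rfl⟩)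
    · rw [Submodule.span_le]
      rintro _ ⟨j, rfl⟩
      exact Submodule.subset_span (gen_mem_cone hspec hσ j.2)
  rw [hspan, finrank_span_eq_card]
  · exact Fintype.card_coe _
  · exact (EC bC σ).linearIndependent.comp _ Subtype.val_injective

lemma card_le_of_subset (hspec : GoodChoice F bC sC) {σ τ : Set (Fin n → ℝ)}
    (hσ : σ ∈ F.cones) (hτ : τ ∈ F.cones) (h : σ ⊆ τ) : (sC σ).card ≤ (sC τ).card := by
  rw [← finrank_span_cone hspec hσ, ← finrank_span_cone hspec hτ]
  exact Submodule.finrank_mono (Submodule.span_mono h)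

lemma eq_of_subset_card_eq (hspec : GoodChoice F bC sC) {σ τ : Set (Fin n → ℝ)}
    (hσ : σ ∈ F.cones) (hτ : τ ∈ F.cones) (h : σ ⊆ τ)
    (hcard : (sC σ).card = (sC τ).card) : σ = τ := by
  have hspan : Submodule.span ℝ σ = Submodule.span ℝ τ := by
    apply Submodule.eq_of_le_of_finrank_eq (Submodule.span_mono h)
    rw [finrank_span_cone hspec hσ, finrank_span_cone hspec hτ, hcard]
  obtain ⟨u, hu, heq⟩ : IsFaceOfCone σ τ := by
    have := (F.inter_face σ hσ τ hτ).2
    rwa [Set.inter_eq_self_of_subset_left h] at this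
  have hker : Submodule.span ℝ σ ≤ LinearMap.ker u := by
    rw [Submodule.span_le]
    intro y hy
    have : y ∈ {x ∈ τ | u x = 0} := heq ▸ hy
    exact this.2
  apply Set.Subset.antisymm h
  intro x hxτ
  have hx : u x = 0 := by
    have : x ∈ Submodule.span ℝ τ := Submodule.subset_span hxτ
    rw [← hspan] at this
    exact hker this
  rw [heq]
  exact ⟨hxτ, hx⟩

end PolyRep


section Heart
open MvPolynomial

variable {n : ℕ} {F : Fan n} {bC : Set (Fin n → ℝ) → Module.Basis (Fin n) ℤ (Fin n → ℤ)}
    {sC : Set (Fin n → ℝ) → Finset (Fin n)}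

lemma evalR_maskP (t : Finset (Fin n)) (p : MvPolynomial (Fin n) ℚ) (y : Fin n → ℝ) :
    evalR (maskP t p) y = evalR p (fun k => if k ∈ t then y k else 0) := by
  rw [maskP, evalR_aeval]
  congr 1
  funext k
  split <;> simp

/-- The heart of the argument: a piecewise polynomial function on a regular cone that
vanishes on all facets is divisible by the product of the coordinates. -/
lemma step_divisibility (hspec : GoodChoice F bC sC) {σ : Set (Fin n → ℝ)}
    (hσ : σ ∈ F.cones) (r : (Fin n → ℝ) → ℝ) (q : MvPolynomial (Fin n) ℚ)
    (hq : ∀ x ∈ σ, r x = evalR q x)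
    (hfacet : ∀ j ∈ sC σ, ∀ x ∈ σ, (EC bC σ).repr x j = 0 → r x = 0) :
    ∃ H : MvPolynomial (Fin n) ℚ,
      ∀ x ∈ σ, r x = evalR H x * ∏ j ∈ sC σ, (EC bC σ).repr x j := by
  classical
  set s := sC σ with hs
  set E := EC bC σ with hE
  -- the linear substitution realizing y ↦ ∑ y j • E j
  set A : Fin n → MvPolynomial (Fin n) ℚ :=
    fun i => ∑ j, C ((bC σ j i : ℤ) : ℚ) * X j with hA
  have hAeval : ∀ (y : Fin n → ℝ) (i : Fin n),
      evalR (A i) y = (∑ j, y j • E j) i := by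
    intro y i
    rw [hA]
    rw [evalR_sum]
    rw [Finset.sum_apply]
    refine Finset.sum_congr rfl fun j _ => ?_
    rw [evalR_mul, evalR_C, evalR_X, hE, EC, basR_apply]
    simp [ι, mul_comm]
  set qt : MvPolynomial (Fin n) ℚ := aeval A q with hqt
  have hqteval : ∀ y : Fin n → ℝ, evalR qt y = evalR q (∑ j, y j • E j) := by
    intro y
    rw [hqt, evalR_aeval]
    congr 1
    funext i
    exact hAeval y i
  -- points with coordinates supported on s and nonnegative lie in σ
  have hmemσ : ∀ y : Fin n → ℝ, (∀ j ∈ s, 0 ≤ y j) → (∀ j ∉ s, y j = 0) →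
      (∑ j, y j • E j) ∈ σ ∧ ∀ j, E.repr (∑ j, y j • E j) j = y j := by
    intro y h1 h2
    have hrepr : ∀ j, E.repr (∑ j, y j • E j) j = y j := by
      intro j
      rw [hE, Module.Basis.repr_sum_self]
    constructor
    · rw [mem_cone_iff hspec hσ]
      refine ⟨fun j => ?_, fun j hj => ?_⟩
      · rw [hrepr]
        by_cases hj : j ∈ s
        · exact h1 j hj
        · rw [h2 j hj]
      · rw [hrepr]
        exact h2 j hj
    · exact hrepr
  -- vanishing of the facet masks
  have hBzero : ∀ j ∈ s, maskP (s.erase j) qt = 0 := by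
    intro j hj
    have hmap : MvPolynomial.map (algebraMap ℚ ℝ) (maskP (s.erase j) qt) = 0 := by
      apply eq_zero_of_vanish_orthant (s.erase j)
      intro y hy
      have : eval y (MvPolynomial.map (algebraMap ℚ ℝ) (maskP (s.erase j) qt))
          = evalR (maskP (s.erase j) qt) y := rfl
      rw [this, evalR_maskP]
      set y' : Fin n → ℝ := fun k => if k ∈ s.erase j then y k else 0 with hy'
      have h1 : ∀ k ∈ s, 0 ≤ y' k := by
        intro k hk
        rw [hy']
        dsimp only
        split
        · exact hy k (by assumption)
        · exact le_refl 0
      have h2 : ∀ k ∉ s, y' k = 0 := by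
        intro k hk
        rw [hy']
        dsimp only
        rw [if_neg (fun hc => hk (Finset.mem_of_mem_erase hc))]
      obtain ⟨hmem, hrepr⟩ := hmemσ y' h1 h2
      have hj0 : E.repr (∑ k, y' k • E k) j = 0 := by
        rw [hrepr j, hy']
        dsimp only
        rw [if_neg (Finset.notMem_erase j s)]
      have := hfacet j hj _ hmem hj0
      rw [hq _ hmem] at this
      rw [← hqteval y'] at this
      exact this
    have hinj : Function.Injective (MvPolynomial.map (algebraMap ℚ ℝ) :
        MvPolynomial (Fin n) ℚ → MvPolynomial (Fin n) ℝ) :=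
      MvPolynomial.map_injective _ (fun a b hab => by exact_mod_cast hab)
    have : MvPolynomial.map (algebraMap ℚ ℝ) (maskP (s.erase j) qt)
        = MvPolynomial.map (algebraMap ℚ ℝ) 0 := by rw [hmap, map_zero]
    exact hinj this
  -- divisibility of the masked polynomial
  have hdvd : (∏ j ∈ s, X j : MvPolynomial (Fin n) ℚ) ∣ maskP s qt := by
    apply prod_X_dvd_of_coeff
    rintro m ⟨j, hj, hmj⟩
    rw [coeff_maskP]
    split_ifs with hsub
    · have hsub' : m.support ⊆ s.erase j := by
        intro k hk
        refine Finset.mem_erase.mpr ⟨?_, hsub hk⟩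
        rintro rfl
        exact (Finsupp.mem_support_iff.mp hk) hmj
      have := hBzero j hj
      have hco : coeff m (maskP (s.erase j) qt) = coeff m qt := by
        rw [coeff_maskP, if_pos hsub']
      rw [this] at hco
      rw [coeff_zero] at hco
      exact hco.symm
    · rfl
  obtain ⟨Ht, hHt⟩ := hdvd
  -- substitute the coordinates back
  have hcoord : ∀ j : Fin n, ∃ p : MvPolynomial (Fin n) ℚ, ∀ x, evalR p x = E.coord j x :=
    fun j => coord_rat (bC σ) j
  choose CP hCP using hcoord
  refine ⟨aeval CP Ht, fun x hx => ?_⟩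
  obtain ⟨h1, h2⟩ := (mem_cone_iff hspec hσ x).mp hx
  set y : Fin n → ℝ := fun j => E.repr x j with hy
  have hxy : (∑ j, y j • E j) = x := by
    rw [hy, hE]
    exact (EC bC σ).sum_repr x
  have hyy : (fun k => if k ∈ s then y k else 0) = y := by
    funext k
    split
    · rfl
    · rw [hy]
      dsimp only
      rw [h2 k (by assumption)]
  calc r x = evalR q x := hq x hx
    _ = evalR qt y := by rw [hqteval, hxy]
    _ = evalR (maskP s qt) y := by rw [evalR_maskP, hyy]
    _ = evalR ((∏ j ∈ s, X j) * Ht) y := by rw [← hHt]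
    _ = (∏ j ∈ s, y j) * evalR Ht y := by
        rw [evalR_mul, evalR_prod]
        congr 1
        exact Finset.prod_congr rfl fun j _ => evalR_X j y
    _ = evalR (aeval CP Ht) x * ∏ j ∈ s, E.repr x j := by
        rw [evalR_aeval]
        have : (fun i => evalR (CP i) x) = y := by
          funext i
          rw [hCP i x, Module.Basis.coord_apply, hy]
        rw [this]
        rw [mul_comm]

end Heart


/-- For a regular fan `Σ`, the `PP^*(N_ℚ)`-module `PP^*(Σ)` is generated by
the finitely many canonical functions `φ_σ` (each one a product of finitely many
degree-one, i.e. piecewise linear, elements, supported on the star of a cone): every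
piecewise polynomial function on `Σ` is a finite combination `Σ p_i · g_i` with
polynomial coefficients `p_i`. -/
theorem stmt6 {n : ℕ} (F : Fan n) (hreg : F.IsRegular) :
    ∃ (m : ℕ) (g : Fin m → ((Fin n → ℝ) → ℝ)),
      (∀ i, PPfun F (g i)) ∧
      (∀ i, ∃ (k : ℕ) (ℓ : Fin k → ((Fin n → ℝ) → ℝ)),
          (∀ j, PPfun F (ℓ j) ∧ IsPWLinear F (ℓ j)) ∧
          ∀ x, g i x = ∏ j, ℓ j x) ∧
      (∀ i, ∃ σ ∈ F.cones, ∀ σ' ∈ F.cones, ¬ σ ⊆ σ' → ∀ x ∈ σ', g i x = 0) ∧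
      ∀ f, PPfun F f → ∃ p : Fin m → MvPolynomial (Fin n) ℚ,
        ∀ x ∈ F.supp, f x = ∑ i, evalR (p i) x * g i x := by
  classical
  haveI : Nonempty (Module.Basis (Fin n) ℤ (Fin n → ℤ)) := ⟨Pi.basisFun ℤ (Fin n)⟩
  choose! bC sC hspec using hreg
  have hgood : GoodChoice F bC sC := hspec
  set cs : Finset (Set (Fin n → ℝ)) := F.finite.toFinset with hcs
  have hcs_mem : ∀ τ, τ ∈ cs ↔ τ ∈ F.cones := fun τ => Set.Finite.mem_toFinset _
  set m := cs.card with hm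
  set e : Fin m ≃ ↥cs := cs.equivFin.symm with he
  refine ⟨m, fun i => gfun F bC sC ((e i : Set (Fin n → ℝ))), ?_, ?_, ?_, ?_⟩
  · -- each generator is piecewise polynomial
    intro i σ hσ
    exact gfun_rep hgood _ hσ
  · -- each generator is a product of piecewise linear functions
    intro i
    set σ : Set (Fin n → ℝ) := (e i : Set (Fin n → ℝ)) with hσdef
    set eqv : ↥(sC σ) ≃ Fin (sC σ).card := (sC σ).equivFin with heqv
    refine ⟨(sC σ).card,
      fun j' => rfn F bC sC (EC bC σ ((eqv.symm j' : ↥(sC σ)) : Fin n)), ?_, ?_⟩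
    · intro j'
      constructor
      · intro τ hτ
        exact rfn_rep hgood hτ _
      · intro τ hτ
        exact ⟨cval bC sC τ _, fun x hx => rfn_eq hgood hτ hx _⟩
    · intro x
      show gfun F bC sC σ x
        = ∏ j' : Fin (sC σ).card, rfn F bC sC (EC bC σ ((eqv.symm j' : ↥(sC σ)) : Fin n)) x
      have hgf : gfun F bC sC σ x = ∏ j ∈ sC σ, rfn F bC sC (EC bC σ j) x := rfl
      rw [hgf]
      rw [← Finset.prod_coe_sort (sC σ) (fun j => rfn F bC sC (EC bC σ j) x)]
      exact (Equiv.prod_comp eqv.symm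
        (fun j : ↥(sC σ) => rfn F bC sC (EC bC σ (j : Fin n)) x)).symm
  · -- support condition
    intro i
    refine ⟨(e i : Set (Fin n → ℝ)), (hcs_mem _).mp (e i).2, ?_⟩
    intro σ' hσ' hns x hx
    exact gfun_vanish hgood ((hcs_mem _).mp (e i).2) hσ' hns x hx
  · -- generation
    intro f hf
    have main : ∀ d : ℕ, ∃ h : Set (Fin n → ℝ) → MvPolynomial (Fin n) ℚ,
        ∀ σ ∈ F.cones, (sC σ).card < d →
          ∀ x ∈ σ, f x = ∑ τ ∈ cs, evalR (h τ) x * gfun F bC sC τ x := by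
      intro d
      induction d with
      | zero => exact ⟨fun _ => 0, fun σ _ h => absurd h (Nat.not_lt_zero _)⟩
      | succ d ih =>
        obtain ⟨h, hh⟩ := ih
        set r : (Fin n → ℝ) → ℝ :=
          fun x => f x - ∑ τ ∈ cs, evalR (h τ) x * gfun F bC sC τ x with hr
        have hrvan : ∀ τ ∈ F.cones, (sC τ).card < d → ∀ x ∈ τ, r x = 0 := by
          intro τ hτ hlt x hx
          rw [hr]
          dsimp only
          rw [← hh τ hτ hlt x hx]
          ring
        have hstep : ∀ σ, σ ∈ F.cones → (sC σ).card = d →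
            ∃ H, ∀ x ∈ σ, r x = evalR H x * gfun F bC sC σ x := by
          intro σ hσ hσd
          obtain ⟨pf, hpf⟩ := hf σ hσ
          have hGex : ∀ τ : Set (Fin n → ℝ), ∃ p : MvPolynomial (Fin n) ℚ,
              ∀ x ∈ σ, gfun F bC sC τ x = evalR p x :=
            fun τ => gfun_rep hgood τ hσ
          choose G hG using hGex
          have hqrep : ∀ x ∈ σ, r x = evalR (pf - ∑ τ ∈ cs, h τ * G τ) x := by
            intro x hx
            rw [hr]
            dsimp only
            rw [evalR_sub, ← hpf x hx, evalR_sum]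
            congr 1
            refine Finset.sum_congr rfl fun τ _ => ?_
            rw [evalR_mul, hG τ x hx]
          have hfacet : ∀ j ∈ sC σ, ∀ x ∈ σ, (EC bC σ).repr x j = 0 → r x = 0 := by
            intro j hj x hx hx0
            set u : (Fin n → ℝ) →ₗ[ℝ] ℝ := (EC bC σ).coord j with hu
            have hupos : ∀ y ∈ σ, 0 ≤ u y := by
              intro y hy
              rw [hu, Module.Basis.coord_apply]
              exact ((mem_cone_iff hgood hσ y).mp hy).1 j
            have hface : IsFaceOfCone {y ∈ σ | u y = 0} σ := ⟨u, hupos, rfl⟩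
            have hτc : {y ∈ σ | u y = 0} ∈ F.cones := F.face_mem σ hσ _ hface
            have hτsub : {y ∈ σ | u y = 0} ⊆ σ := fun y hy => hy.1
            have hτlt : (sC {y ∈ σ | u y = 0}).card < d := by
              have hle := card_le_of_subset hgood hτc hσ hτsub
              rcases lt_or_eq_of_le hle with hlt | heq
              · omega
              · exfalso
                have := eq_of_subset_card_eq hgood hτc hσ hτsub heq
                have hEj : EC bC σ j ∈ {y ∈ σ | u y = 0} := by
                  rw [this]
                  exact gen_mem_cone hgood hσ hj
                have : u (EC bC σ j) = 0 := hEj.2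
                rw [hu, Module.Basis.coord_apply, Module.Basis.repr_self] at this
                simp at this
            exact hrvan _ hτc hτlt x ⟨hx, by rw [hu, Module.Basis.coord_apply]; exact hx0⟩
          obtain ⟨H, hH⟩ := step_divisibility hgood hσ r _ hqrep hfacet
          refine ⟨H, fun x hx => ?_⟩
          rw [hH x hx, gfun_on_self hgood hσ hx]
        choose! H hH using hstep
        refine ⟨fun τ => h τ + if (sC τ).card = d then H τ else 0, ?_⟩
        intro σ hσ hlt x hx
        have hsplit : ∑ τ ∈ cs,
            evalR (h τ + if (sC τ).card = d then H τ else 0) x * gfun F bC sC τ x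
            = (∑ τ ∈ cs, evalR (h τ) x * gfun F bC sC τ x)
              + ∑ τ ∈ cs,
                  evalR (if (sC τ).card = d then H τ else 0) x * gfun F bC sC τ x := by
          rw [← Finset.sum_add_distrib]
          refine Finset.sum_congr rfl fun τ _ => ?_
          rw [evalR_add]
          ring
        rw [hsplit]
        have hvan : ∀ τ ∈ cs, τ ≠ σ → (sC τ).card = d → gfun F bC sC τ x = 0 := by
          intro τ hτ hne hτd
          have hτc : τ ∈ F.cones := (hcs_mem τ).mp hτ
          have hns : ¬ τ ⊆ σ := by
            intro hsub
            have hle := card_le_of_subset hgood hτc hσ hsub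
            have hceq : (sC τ).card = (sC σ).card := by omega
            exact hne (eq_of_subset_card_eq hgood hτc hσ hsub hceq)
          exact gfun_vanish hgood hτc hσ hns x hx
        by_cases hcard : (sC σ).card = d
        · have h2 : ∑ τ ∈ cs,
              evalR (if (sC τ).card = d then H τ else 0) x * gfun F bC sC τ x
              = evalR (H σ) x * gfun F bC sC σ x := by
            rw [Finset.sum_eq_single_of_mem σ ((hcs_mem σ).mpr hσ)]
            · rw [if_pos hcard]
            · intro τ hτ hne
              by_cases hτd : (sC τ).card = d
              · rw [hvan τ hτ hne hτd, mul_zero]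
              · rw [if_neg hτd, evalR_zero, zero_mul]
          rw [h2, ← hH σ hσ hcard x hx, hr]
          ring
        · have hlt' : (sC σ).card < d := by omega
          have h2 : ∑ τ ∈ cs,
              evalR (if (sC τ).card = d then H τ else 0) x * gfun F bC sC τ x = 0 := by
            apply Finset.sum_eq_zero
            intro τ hτ
            by_cases hτd : (sC τ).card = d
            · rcases eq_or_ne τ σ with rfl | hne
              · omega
              · rw [hvan τ hτ hne hτd, mul_zero]
            · rw [if_neg hτd, evalR_zero, zero_mul]
          rw [h2, add_zero]
          exact hh σ hσ hlt' x hx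
    obtain ⟨h, hh⟩ := main (n + 1)
    refine ⟨fun i => h ((e i : Set (Fin n → ℝ))), ?_⟩
    intro x hx
    obtain ⟨σ, hσ, hxσ⟩ := hx
    have hcardle : (sC σ).card < n + 1 := by
      have h1 : (sC σ).card ≤ Finset.univ.card := Finset.card_le_univ (sC σ)
      have h2 : (Finset.univ : Finset (Fin n)).card = n := by simp
      omega
    rw [hh σ hσ hcardle x hxσ]
    rw [← Finset.sum_coe_sort cs (fun τ => evalR (h τ) x * gfun F bC sC τ x)]
    exact (Equiv.sum_comp e
      (fun τ : ↥cs => evalR (h (τ : Set (Fin n → ℝ))) x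
        * gfun F bC sC (τ : Set (Fin n → ℝ)) x)).symm

end PPArakelov
end

section
/- An affine piecewise polynomial function of degree one on a complete regular SCR polyhedral complex Π induces a continuous piecewise affine function on N_ℝ, and conversely every piecewise affine function with respect to Π arises from a unique degree-one affine piecewise polynomial function; hence PP^1(Π) is isomorphic to the space of piecewise affine functions on Π. -/
open scoped BigOperators

namespace PPArakelov

/-! ### Auxiliary lemmas for `stmt11` -/

section Aux

open MvPolynomial Pointwise

variable {n : ℕ}

/-- The affine polynomial `a + ∑ l i * X i`. -/
noncomputable def affinePoly (a : ℚ) (l : Fin n → ℚ) : MvPolynomial (Fin n) ℚ :=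
  MvPolynomial.C a + ∑ i, MvPolynomial.C (l i) * MvPolynomial.X i

lemma evalR_affinePoly (a : ℚ) (l : Fin n → ℚ) (x : Fin n → ℝ) :
    evalR (affinePoly a l) x = (a : ℝ) + ∑ i, (l i : ℝ) * x i := by
  simp [evalR, affinePoly, map_sum, eq_ratCast]

lemma totalDegree_affinePoly_le (a : ℚ) (l : Fin n → ℚ) :
    (affinePoly a l).totalDegree ≤ 1 := by
  refine le_trans (totalDegree_add _ _) ?_
  rw [max_le_iff]
  constructor
  · simp [totalDegree_C]
  · refine le_trans (totalDegree_finset_sum _ _) ?_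
    refine Finset.sup_le fun i _ => ?_
    refine le_trans (totalDegree_mul _ _) ?_
    simp [totalDegree_C, totalDegree_X]

lemma monomial_classify (d : Fin n →₀ ℕ) (hd : (d.sum fun _ e => e) ≤ 1) :
    d = 0 ∨ ∃ i, d = Finsupp.single i 1 := by
  classical
  by_cases h0 : d = 0
  · exact Or.inl h0
  right
  obtain ⟨i, hi⟩ : ∃ i, d i ≠ 0 := by
    by_contra h
    push_neg at h
    exact h0 (Finsupp.ext h)
  have hisupp : i ∈ d.support := Finsupp.mem_support_iff.mpr hi
  have hsum : (d.sum fun _ e => e) = ∑ j ∈ d.support, d j := rfl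
  have key : d i + ∑ j ∈ d.support.erase i, d j ≤ 1 := by
    rw [Finset.add_sum_erase _ _ hisupp, ← hsum]; exact hd
  have hdi : d i = 1 := by omega
  have hzero : ∀ j ∈ d.support.erase i, d j = 0 := by
    have h1 : ∑ j ∈ d.support.erase i, d j = 0 := by omega
    intro j hj
    exact (Finset.sum_eq_zero_iff.mp h1) j hj
  refine ⟨i, ?_⟩
  ext j
  by_cases hji : j = i
  · subst hji; simp [hdi]
  · rw [Finsupp.single_apply, if_neg (fun h => hji h.symm)]
    by_cases hjs : j ∈ d.support
    · exact hzero j (Finset.mem_erase.mpr ⟨hji, hjs⟩)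
    · exact Finsupp.notMem_support_iff.mp hjs

lemma eval_eq_affine_of_totalDegree_le_one (p : MvPolynomial (Fin n) ℚ)
    (hp : p.totalDegree ≤ 1) :
    ∃ (a : ℚ) (l : Fin n → ℚ), ∀ x : Fin n → ℝ,
      evalR p x = (a : ℝ) + ∑ i, (l i : ℝ) * x i := by
  classical
  refine ⟨p.coeff 0, fun i => p.coeff (Finsupp.single i 1), fun x => ?_⟩
  have hp2 : p = affinePoly (p.coeff 0) (fun i => p.coeff (Finsupp.single i 1)) := by
    apply MvPolynomial.ext
    intro d
    rw [affinePoly, coeff_add, coeff_C, coeff_sum]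
    have hterm : ∀ i : Fin n,
        coeff d (MvPolynomial.C (p.coeff (Finsupp.single i 1)) * MvPolynomial.X i)
          = p.coeff (Finsupp.single i 1) * (if Finsupp.single i 1 = d then 1 else 0) := by
      intro i; rw [coeff_C_mul, coeff_X']
    simp only [hterm]
    have hsum0 : ∀ (d' : Fin n →₀ ℕ), (∀ i : Fin n, Finsupp.single i 1 ≠ d') →
        (∑ i, p.coeff (Finsupp.single i 1) * (if Finsupp.single i 1 = d' then 1 else 0))
          = 0 :=
      fun d' hd' => Finset.sum_eq_zero fun i _ => by rw [if_neg (hd' i), mul_zero]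
    have hne0 : ∀ i : Fin n, (Finsupp.single i 1 : Fin n →₀ ℕ) ≠ 0 :=
      fun i h => one_ne_zero (Finsupp.single_eq_zero.mp h)
    rcases em ((0 : Fin n →₀ ℕ) = d) with h0 | h0
    · subst h0
      rw [if_pos rfl, hsum0 0 hne0, add_zero]
    · rw [if_neg h0, zero_add]
      rcases em (∃ i, Finsupp.single i 1 = d) with ⟨i, hi⟩ | hno
      · subst hi
        rw [Finset.sum_eq_single i (fun j _ hji => by
            rw [if_neg fun hc => hji (Finsupp.single_left_injective one_ne_zero hc), mul_zero])
          (fun h => absurd (Finset.mem_univ i) h), if_pos rfl, mul_one]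
      · rw [hsum0 d (not_exists.mp hno)]
        by_cases hds : d ∈ p.support
        · rcases monomial_classify d (le_trans (le_totalDegree hds) hp) with hh | ⟨i, hi⟩
          · exact absurd hh.symm h0
          · exact absurd hi (fun hh => hno ⟨i, hh.symm⟩)
        · exact MvPolynomial.notMem_support_iff.mp hds
  conv_lhs => rw [hp2, evalR_affinePoly]

lemma affine_eq_of_ball {a b : ℝ} {l m : Fin n → ℝ} {x0 : Fin n → ℝ} {ε : ℝ}
    (hε : 0 < ε)
    (h : ∀ x ∈ Metric.ball x0 ε, a + ∑ i, l i * x i = b + ∑ i, m i * x i)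
    (x : Fin n → ℝ) : a + ∑ i, l i * x i = b + ∑ i, m i * x i := by
  classical
  have h0 : a + ∑ i, l i * x0 i = b + ∑ i, m i * x0 i := h x0 (Metric.mem_ball_self hε)
  have expand : ∀ (c e : Fin n → ℝ) (i : Fin n), (∀ j, j ≠ i → e j = 0) →
      ∑ j, c j * (x0 j + e j) = (∑ j, c j * x0 j) + c i * e i := by
    intro c e i he
    simp only [mul_add, Finset.sum_add_distrib]
    congr 1
    rw [Finset.sum_eq_single i (fun j _ hji => by rw [he j hji, mul_zero])
      (fun h => absurd (Finset.mem_univ i) h)]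
  have hcoef : ∀ i, l i = m i := by
    intro i
    set e : Fin n → ℝ := fun j => if j = i then ε/2 else 0 with he
    have hzero : ∀ j, j ≠ i → e j = 0 := fun j hji => by rw [he]; exact if_neg hji
    have hei : e i = ε/2 := by rw [he]; exact if_pos rfl
    have hxmem : (x0 + e) ∈ Metric.ball x0 ε := by
      rw [Metric.mem_ball]
      have hd : dist (x0 + e) x0 = ‖e‖ := by rw [dist_eq_norm]; congr 1; abel
      rw [hd]
      have hle : ‖e‖ ≤ ε/2 := by
        refine (pi_norm_le_iff_of_nonneg (by positivity)).mpr ?_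
        intro j
        rw [he]
        dsimp only
        by_cases hj : j = i
        · rw [if_pos hj, Real.norm_eq_abs, abs_of_pos (by positivity)]
        · rw [if_neg hj, norm_zero]
          positivity
      linarith
    have h1 := h _ hxmem
    simp only [Pi.add_apply] at h1
    rw [expand l e i hzero, expand m e i hzero, hei] at h1
    have h2 : l i * (ε/2) = m i * (ε/2) := by linarith
    exact mul_right_cancel₀ (by positivity) h2
  have hsum : ∀ y : Fin n → ℝ, ∑ i, l i * y i = ∑ i, m i * y i := by
    intro y; exact Finset.sum_congr rfl fun i _ => by rw [hcoef i]
  have hab : a = b := by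
    have := h0; rw [hsum x0] at this; linarith
  rw [hab, hsum x]

lemma isClosed_coneSet {α : Type*} :
    ∀ (N : ℕ) (s : Finset α) (G : α → (Fin n → ℝ)), s.card ≤ N →
    IsClosed {x : Fin n → ℝ | ∃ c : α → ℝ, (∀ a, 0 ≤ c a) ∧ x = ∑ a ∈ s, c a • G a} := by
  intro N
  induction N with
  | zero =>
    intro s G hs
    have hse : s = ∅ := Finset.card_eq_zero.mp (Nat.le_zero.mp hs)
    subst hse
    have : {x : Fin n → ℝ | ∃ c : α → ℝ, (∀ a, 0 ≤ c a) ∧ x = ∑ a ∈ (∅ : Finset α), c a • G a}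
        = {0} := by
      ext x
      simp only [Finset.sum_empty, Set.mem_setOf_eq, Set.mem_singleton_iff]
      constructor
      · rintro ⟨c, _, rfl⟩; rfl
      · rintro rfl; exact ⟨fun _ => 0, fun _ => le_rfl, rfl⟩
    rw [this]
    exact isClosed_singleton
  | succ N ih =>
    intro s G hs
    classical
    by_cases hind : LinearIndependent ℝ (fun a : ↥s => G ↑a)
    · set T : (↥s → ℝ) →ₗ[ℝ] (Fin n → ℝ) :=
        ∑ a : ↥s, (LinearMap.proj a).smulRight (G ↑a) with hT
      have hTapp : ∀ c : ↥s → ℝ, T c = ∑ a : ↥s, c a • G ↑a := by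
        intro c
        rw [hT, LinearMap.sum_apply]
        exact Finset.sum_congr rfl fun a _ => by
          rw [LinearMap.smulRight_apply, LinearMap.proj_apply]
      have hker : LinearMap.ker T = ⊥ := by
        rw [LinearMap.ker_eq_bot']
        intro c hc
        funext a
        exact Fintype.linearIndependent_iff.mp hind c (by rw [← hTapp]; exact hc) a
      have hemb := LinearMap.isClosedEmbedding_of_injective hker
      have horth : IsClosed {c : ↥s → ℝ | ∀ a, 0 ≤ c a} := by
        have : {c : ↥s → ℝ | ∀ a, 0 ≤ c a} = ⋂ a, {c | 0 ≤ c a} := by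
          ext c; simp [Set.mem_iInter]
        rw [this]
        exact isClosed_iInter fun a => isClosed_le continuous_const (continuous_apply a)
      have himg : {x : Fin n → ℝ | ∃ c : α → ℝ, (∀ a, 0 ≤ c a) ∧ x = ∑ a ∈ s, c a • G a}
          = T '' {c : ↥s → ℝ | ∀ a, 0 ≤ c a} := by
        ext x
        constructor
        · rintro ⟨c, hc, rfl⟩
          refine ⟨fun a => c ↑a, fun a => hc _, ?_⟩
          rw [hTapp, Finset.sum_coe_sort s (fun a => c a • G a)]
        · rintro ⟨c, hc, rfl⟩
          refine ⟨fun a => if h : a ∈ s then c ⟨a, h⟩ else 0, fun a => ?_, ?_⟩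
          · dsimp only
            by_cases h : a ∈ s
            · rw [dif_pos h]; exact hc _
            · rw [dif_neg h]
          · rw [hTapp, ← Finset.sum_coe_sort s]
            refine Finset.sum_congr rfl fun a _ => ?_
            dsimp only
            rw [dif_pos a.2]
      rw [himg]
      exact (hemb.isClosedMap) _ horth
    · obtain ⟨gg, hggsum, a0, hga0⟩ := Fintype.not_linearIndependent_iff.mp hind
      obtain ⟨g, hgsum, i0, hgi0⟩ :
          ∃ g : ↥s → ℝ, (∑ a : ↥s, g a • G ↑a = 0) ∧ ∃ a, 0 < g a := by
        rcases hga0.lt_or_gt with hneg | hpos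
        · refine ⟨-gg, ?_, a0, by simpa using hneg⟩
          rw [← neg_zero, ← hggsum, ← Finset.sum_neg_distrib]
          exact Finset.sum_congr rfl fun a _ => by rw [Pi.neg_apply, neg_smul]
        · exact ⟨gg, hggsum, a0, hpos⟩
      set d : α → ℝ := fun a => if h : a ∈ s then g ⟨a, h⟩ else 0 with hd
      have hdsum : ∑ a ∈ s, d a • G a = 0 := by
        rw [← Finset.sum_coe_sort s (fun a => d a • G a), ← hgsum]
        refine Finset.sum_congr rfl fun a _ => ?_
        simp only [hd]
        rw [dif_pos a.2]
      have hF : ((s.filter fun a => 0 < d a)).Nonempty := by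
        refine ⟨↑i0, Finset.mem_filter.mpr ⟨i0.2, ?_⟩⟩
        simp only [hd]
        rw [dif_pos i0.2]
        exact hgi0
      have hset : {x : Fin n → ℝ | ∃ c : α → ℝ, (∀ a, 0 ≤ c a) ∧ x = ∑ a ∈ s, c a • G a}
          = ⋃ a ∈ (s.filter fun a => 0 < d a),
              {x : Fin n → ℝ | ∃ c : α → ℝ, (∀ b, 0 ≤ c b) ∧ x = ∑ b ∈ s.erase a, c b • G b} := by
        ext x
        simp only [Set.mem_setOf_eq, Set.mem_iUnion, exists_prop]
        constructor
        · rintro ⟨c, hc, rfl⟩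
          obtain ⟨a0, ha0F, ha0min⟩ :=
            Finset.exists_min_image (s.filter fun a => 0 < d a) (fun a => c a / d a) hF
          have ha0s : a0 ∈ s := (Finset.mem_filter.mp ha0F).1
          have hda0 : 0 < d a0 := (Finset.mem_filter.mp ha0F).2
          set t := c a0 / d a0 with ht
          have ht0 : 0 ≤ t := div_nonneg (hc a0) hda0.le
          refine ⟨a0, ha0F, fun b => c b - t * d b, ?_, ?_⟩
          · intro b
            show 0 ≤ c b - t * d b
            by_cases hb : 0 < d b
            · have hbs : b ∈ s := by
                by_contra hbs
                rw [hd] at hb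
                simp only [dif_neg hbs] at hb
                exact lt_irrefl 0 hb
              have hmin := ha0min b (Finset.mem_filter.mpr ⟨hbs, hb⟩)
              have : t * d b ≤ c b := by
                rw [← le_div_iff₀ hb]; exact hmin
              linarith
            · have : t * d b ≤ 0 := mul_nonpos_of_nonneg_of_nonpos ht0 (not_lt.mp hb)
              have := hc b
              linarith
          · show ∑ b ∈ s, c b • G b = ∑ b ∈ s.erase a0, (c b - t * d b) • G b
            have hsplit : ∑ b ∈ s, (c b - t * d b) • G b = ∑ b ∈ s, c b • G b := by
              have h1 : ∀ b ∈ s, (c b - t * d b) • G b = c b • G b - t • (d b • G b) := by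
                intro b _
                rw [sub_smul, smul_smul]
              rw [Finset.sum_congr rfl h1, Finset.sum_sub_distrib, ← Finset.smul_sum, hdsum,
                smul_zero, sub_zero]
            have hca0 : c a0 - t * d a0 = 0 := by
              rw [ht, div_mul_cancel₀ _ (ne_of_gt hda0), sub_self]
            rw [← Finset.add_sum_erase s _ ha0s, hca0, zero_smul, zero_add] at hsplit
            exact hsplit.symm
        · rintro ⟨a, haF, c, hc, rfl⟩
          have has : a ∈ s := (Finset.mem_filter.mp haF).1
          refine ⟨fun b => if b = a then 0 else c b, fun b => ?_, ?_⟩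
          · show (0:ℝ) ≤ if b = a then 0 else c b
            by_cases hb : b = a
            · rw [if_pos hb]
            · rw [if_neg hb]; exact hc b
          · show ∑ b ∈ s.erase a, c b • G b = ∑ b ∈ s, (if b = a then 0 else c b) • G b
            rw [← Finset.add_sum_erase s _ has, if_pos rfl, zero_smul, zero_add]
            exact (Finset.sum_congr rfl fun b hb => by
              rw [if_neg (Finset.ne_of_mem_erase hb)]).symm
      rw [hset]
      refine Set.Finite.isClosed_biUnion (Finset.finite_toSet _) ?_
      intro a ha
      refine ih (s.erase a) G ?_
      have has : a ∈ s := (Finset.mem_filter.mp ha).1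
      have := Finset.card_erase_of_mem has
      have hcard := Finset.card_pos.mpr ⟨a, has⟩
      omega

lemma mem_polyhedronOf_add {V R : Finset (Fin n → ℚ)} (a c : (Fin n → ℚ) → ℝ)
    (ha : ∀ p, 0 ≤ a p) (hsum : ∑ p ∈ V, a p = 1) (hc : ∀ v, 0 ≤ c v) :
    ((∑ p ∈ V, a p • ιQ p) + ∑ v ∈ R, c v • ιQ v) ∈ polyhedronOf V R :=
  ⟨a, c, ha, hsum, hc, rfl⟩

lemma isClosed_polyhedronOf (V R : Finset (Fin n → ℚ)) :
    IsClosed (polyhedronOf V R) := by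
  classical
  set A : Set (Fin n → ℝ) :=
    {x | ∃ a : (Fin n → ℚ) → ℝ, (∀ p, 0 ≤ a p) ∧ (∑ p ∈ V, a p = 1) ∧ x = ∑ p ∈ V, a p • ιQ p}
    with hA
  set B : Set (Fin n → ℝ) :=
    {x | ∃ c : (Fin n → ℚ) → ℝ, (∀ v, 0 ≤ c v) ∧ x = ∑ v ∈ R, c v • ιQ v} with hB
  have hAcomp : IsCompact A := by
    have himg : A = (fun a : ↥V → ℝ => ∑ p : ↥V, a p • ιQ ↑p) '' stdSimplex ℝ ↥V := by
      ext x
      constructor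
      · rintro ⟨a, ha, hsum, rfl⟩
        refine ⟨fun p => a ↑p, ⟨fun p => ha _, ?_⟩, ?_⟩
        · show ∑ p : ↥V, a ↑p = 1
          rw [Finset.sum_coe_sort V a]; exact hsum
        · show ∑ p : ↥V, a ↑p • ιQ ↑p = ∑ p ∈ V, a p • ιQ p
          rw [Finset.sum_coe_sort V (fun p => a p • ιQ p)]
      · rintro ⟨a, ⟨ha, hsum⟩, rfl⟩
        refine ⟨fun p => if h : p ∈ V then a ⟨p, h⟩ else 0, fun p => ?_, ?_, ?_⟩
        · dsimp only
          by_cases h : p ∈ V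
          · rw [dif_pos h]; exact ha _
          · rw [dif_neg h]
        · rw [← hsum, ← Finset.sum_coe_sort V]
          refine Finset.sum_congr rfl fun p _ => ?_
          rw [dif_pos p.2]
        · rw [← Finset.sum_coe_sort V]
          refine (Finset.sum_congr rfl fun p _ => ?_).symm
          dsimp only
          rw [dif_pos p.2]
    rw [himg]
    refine (isCompact_stdSimplex _ _).image ?_
    exact continuous_finset_sum _ fun p _ => (continuous_apply p).smul continuous_const
  have hBclosed : IsClosed B := isClosed_coneSet R.card R ιQ le_rfl
  have hadd : polyhedronOf V R = A + B := by
    ext x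
    constructor
    · rintro ⟨a, c, ha, hsum, hc, rfl⟩
      exact Set.add_mem_add ⟨a, ha, hsum, rfl⟩ ⟨c, hc, rfl⟩
    · rintro ⟨y, ⟨a, ha, hsum, rfl⟩, z, ⟨c, hc, rfl⟩, rfl⟩
      exact ⟨a, c, ha, hsum, hc, rfl⟩
  rw [hadd]
  exact hBclosed.add_left_of_isCompact hAcomp

lemma poly_closed (C : PolyComplex n) {P : Set (Fin n → ℝ)} (hP : P ∈ C.polys) :
    IsClosed P := by
  obtain ⟨V, R, hV, rfl⟩ := C.rat P hP
  exact isClosed_polyhedronOf V R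

lemma poly_convex (C : PolyComplex n) {P : Set (Fin n → ℝ)} (hP : P ∈ C.polys) :
    Convex ℝ P := by
  obtain ⟨V, R, hV, rfl⟩ := C.rat P hP
  rintro x ⟨a, c, ha, hsum, hc, rfl⟩ y ⟨a', c', ha', hsum', hc', rfl⟩ s t hs ht hst
  refine ⟨fun p => s * a p + t * a' p, fun v => s * c v + t * c' v,
    fun p => add_nonneg (mul_nonneg hs (ha p)) (mul_nonneg ht (ha' p)), ?_, 
    fun v => add_nonneg (mul_nonneg hs (hc v)) (mul_nonneg ht (hc' v)), ?_⟩
  · rw [Finset.sum_add_distrib, ← Finset.mul_sum, ← Finset.mul_sum, hsum, hsum']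
    rw [mul_one, mul_one]; exact hst
  · simp only [smul_add, Finset.smul_sum, smul_smul, add_smul, Finset.sum_add_distrib]
    abel

lemma poly_witness (C : PolyComplex n) {P : Set (Fin n → ℝ)} (hP : P ∈ C.polys) :
    ∃ w ∈ P, ∀ (u : (Fin n → ℝ) →ₗ[ℝ] ℝ) (r : ℝ),
      (∀ z ∈ P, r ≤ u z) → u w = r → ∀ z ∈ P, u z = r := by
  classical
  obtain ⟨V, R, hV, rfl⟩ := C.rat P hP
  have hcard : (0:ℝ) < V.card := by
    have := Finset.card_pos.mpr hV
    exact_mod_cast this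
  have hwmem := mem_polyhedronOf_add (V := V) (R := R) (fun _ => (V.card : ℝ)⁻¹) (fun _ => 1)
    (fun _ => by positivity)
    (by rw [Finset.sum_const, nsmul_eq_mul]; field_simp)
    (fun _ => zero_le_one)
  refine ⟨_, hwmem, ?_⟩
  intro u r hge hwr z hz
  have huval : ∀ (a c : (Fin n → ℚ) → ℝ),
      u ((∑ p ∈ V, a p • ιQ p) + ∑ v ∈ R, c v • ιQ v)
        = (∑ p ∈ V, a p * u (ιQ p)) + ∑ v ∈ R, c v * u (ιQ v) := by
    intro a c
    rw [map_add, map_sum, map_sum]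
    congr 1 <;> exact Finset.sum_congr rfl fun _ _ => by rw [map_smul, smul_eq_mul]
  -- each vertex value is ≥ r
  have hα : ∀ p0 ∈ V, r ≤ u (ιQ p0) := by
    intro p0 hp0
    have hmem := mem_polyhedronOf_add (V := V) (R := R)
      (fun p => if p = p0 then 1 else 0) (fun _ => 0)
      (fun p => by split <;> norm_num)
      (by rw [Finset.sum_ite_eq' V p0 (fun _ => (1:ℝ)), if_pos hp0])
      (fun _ => le_rfl)
    have := hge _ hmem
    rw [huval] at this
    have h1 : ∑ p ∈ V, (if p = p0 then (1:ℝ) else 0) * u (ιQ p) = u (ιQ p0) := by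
      simp only [ite_mul, one_mul, zero_mul]
      rw [Finset.sum_ite_eq' V p0 (fun p => u (ιQ p)), if_pos hp0]
    rw [h1] at this
    simpa using this
  -- each ray value is ≥ 0
  have hβ : ∀ v0 ∈ R, 0 ≤ u (ιQ v0) := by
    intro v0 hv0
    by_contra hneg
    push_neg at hneg
    obtain ⟨p0, hp0⟩ := hV
    have hup0 : r ≤ u (ιQ p0) := hα p0 hp0
    set t := (r - 1 - u (ιQ p0)) / u (ιQ v0) with htdef
    have htpos : 0 ≤ t := div_nonneg_of_nonpos (by linarith) hneg.le
    have hmem := mem_polyhedronOf_add (V := V) (R := R)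
      (fun p => if p = p0 then 1 else 0) (fun v => if v = v0 then t else 0)
      (fun p => by split <;> norm_num)
      (by rw [Finset.sum_ite_eq' V p0 (fun _ => (1:ℝ)), if_pos hp0])
      (fun v => by split; exacts [htpos, le_rfl])
    have hval := hge _ hmem
    rw [huval] at hval
    have h1 : ∑ p ∈ V, (if p = p0 then (1:ℝ) else 0) * u (ιQ p) = u (ιQ p0) := by
      simp only [ite_mul, one_mul, zero_mul]
      rw [Finset.sum_ite_eq' V p0 (fun p => u (ιQ p)), if_pos hp0]
    have h2 : ∑ v ∈ R, (if v = v0 then t else 0) * u (ιQ v) = t * u (ιQ v0) := by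
      simp only [ite_mul, zero_mul]
      rw [Finset.sum_ite_eq' R v0 (fun v => t * u (ιQ v)), if_pos hv0]
    rw [h1, h2] at hval
    have h3 : t * u (ιQ v0) = r - 1 - u (ιQ p0) :=
      div_mul_cancel₀ _ (ne_of_lt hneg)
    rw [h3] at hval
    linarith
  -- expand the witness value
  rw [huval] at hwr
  have hSβ : ∀ v0 ∈ R, u (ιQ v0) = 0 := by
    have hsum1 : (V.card : ℝ)⁻¹ * (∑ p ∈ V, u (ιQ p)) + ∑ v ∈ R, u (ιQ v) = r := by
      rw [← hwr, Finset.mul_sum]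
      congr 1
      all_goals exact Finset.sum_congr rfl fun _ _ => by norm_num
    have hSα : (V.card : ℝ) * r ≤ ∑ p ∈ V, u (ιQ p) := by
      have := Finset.card_nsmul_le_sum V (fun p => u (ιQ p)) r (fun p hp => hα p hp)
      rwa [nsmul_eq_mul] at this
    have hSβnn : 0 ≤ ∑ v ∈ R, u (ιQ v) := Finset.sum_nonneg fun v hv => hβ v hv
    have hkey : r ≤ (V.card : ℝ)⁻¹ * (∑ p ∈ V, u (ιQ p)) := by
      have h := mul_le_mul_of_nonneg_left hSα (inv_nonneg.mpr hcard.le)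
      rwa [inv_mul_cancel_left₀ (ne_of_gt hcard)] at h
    have hSβ0 : ∑ v ∈ R, u (ιQ v) = 0 := by linarith
    intro v0 hv0
    exact (Finset.sum_eq_zero_iff_of_nonneg (fun v hv => hβ v hv)).mp hSβ0 v0 hv0
  have hSα : ∀ p0 ∈ V, u (ιQ p0) = r := by
    have hsum1 : (V.card : ℝ)⁻¹ * (∑ p ∈ V, u (ιQ p)) + ∑ v ∈ R, u (ιQ v) = r := by
      rw [← hwr, Finset.mul_sum]
      congr 1
      all_goals exact Finset.sum_congr rfl fun _ _ => by norm_num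
    have hRz : ∑ v ∈ R, u (ιQ v) = 0 := Finset.sum_eq_zero fun v hv => hSβ v hv
    rw [hRz, add_zero] at hsum1
    have hsums : ∑ p ∈ V, (u (ιQ p) - r) = 0 := by
      rw [Finset.sum_sub_distrib, Finset.sum_const, nsmul_eq_mul]
      have : ∑ p ∈ V, u (ιQ p) = (V.card : ℝ) * r := by
        have h2 := congrArg (fun x => (V.card:ℝ) * x) hsum1
        rwa [mul_inv_cancel_left₀ (ne_of_gt hcard)] at h2
      rw [this]; ring
    intro p0 hp0
    have := (Finset.sum_eq_zero_iff_of_nonneg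
      (fun p hp => by have := hα p hp; linarith : ∀ p ∈ V, 0 ≤ u (ιQ p) - r)).mp hsums p0 hp0
    linarith
  -- conclude for arbitrary z
  obtain ⟨a, c, ha, hsum, hc, rfl⟩ := hz
  rw [huval]
  have hz1 : ∑ p ∈ V, a p * u (ιQ p) = ∑ p ∈ V, a p * r :=
    Finset.sum_congr rfl fun p hp => by rw [hSα p hp]
  have hz2 : ∑ v ∈ R, c v * u (ιQ v) = 0 :=
    Finset.sum_eq_zero fun v hv => by rw [hSβ v hv, mul_zero]
  rw [hz1, hz2, add_zero, ← Finset.sum_mul, hsum, one_mul]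

lemma interior_union_empty {X : Type*} [TopologicalSpace X] {A B : Set X}
    (hA : IsClosed A) (hAi : interior A = ∅) (hBi : interior B = ∅) :
    interior (A ∪ B) = ∅ := by
  have hsub : interior (A ∪ B) \ A ⊆ interior B := by
    refine interior_maximal ?_ (isOpen_interior.sdiff hA)
    intro y hy
    rcases interior_subset hy.1 with h | h
    · exact absurd h hy.2
    · exact h
  have hsubA : interior (A ∪ B) ⊆ A := by
    intro y hy
    by_contra hyA
    have : y ∈ interior B := hsub ⟨hy, hyA⟩
    rw [hBi] at this
    exact this
  have := interior_maximal hsubA isOpen_interior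
  rw [hAi] at this
  exact Set.eq_empty_iff_forall_notMem.mpr fun x hx => this hx

lemma interior_sUnion_empty {X : Type*} [TopologicalSpace X] {S : Set (Set X)} (hS : S.Finite)
    (hcl : ∀ A ∈ S, IsClosed A) (hint : ∀ A ∈ S, interior A = ∅) :
    interior (⋃₀ S) = ∅ := by
  revert hcl hint
  induction S, hS using Set.Finite.induction_on with
  | empty => intro _ _; simp
  | @insert A S' hAS' hS' ih =>
    intro hcl hint
    rw [Set.sUnion_insert]
    exact interior_union_empty (hcl A (Set.mem_insert _ _))
      (hint A (Set.mem_insert _ _))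
      (ih (fun B hB => hcl B (Set.mem_insert_of_mem _ hB))
        (fun B hB => hint B (Set.mem_insert_of_mem _ hB)))

lemma exists_fulldim (C : PolyComplex n) (hC : C.IsComplete) {Λ : Set (Fin n → ℝ)}
    (hΛ : Λ ∈ C.polys) : ∃ P ∈ C.polys, FullDim P ∧ Λ ⊆ P := by
  obtain ⟨w, hwΛ, hwit⟩ := poly_witness C hΛ
  have hKclosed : IsClosed (⋃₀ {P | P ∈ C.polys ∧ w ∉ P}) := by
    rw [Set.sUnion_eq_biUnion]
    exact Set.Finite.isClosed_biUnion (C.finite.subset fun P hP => hP.1)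
      (fun P hP => poly_closed C hP.1)
  have hwK : w ∈ (⋃₀ {P | P ∈ C.polys ∧ w ∉ P})ᶜ := by
    rintro ⟨P, ⟨hP1, hP2⟩, hwP⟩
    exact hP2 hwP
  obtain ⟨ε, hε, hball⟩ := Metric.isOpen_iff.mp hKclosed.isOpen_compl w hwK
  have hfull : ∃ P ∈ C.polys, w ∈ P ∧ FullDim P := by
    by_contra hcon
    push_neg at hcon
    have hint : ∀ P ∈ {P | P ∈ C.polys ∧ w ∈ P}, interior P = ∅ := by
      intro P hP
      have := hcon P hP.1 hP.2
      rwa [FullDim, Set.not_nonempty_iff_eq_empty] at this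
    have hiu := interior_sUnion_empty (C.finite.subset fun P hP => hP.1)
      (fun P hP => poly_closed C hP.1) hint
    have hsub : Metric.ball w ε ⊆ ⋃₀ {P | P ∈ C.polys ∧ w ∈ P} := by
      intro x hx
      have hx1 : x ∈ ⋃₀ C.polys := by rw [hC]; trivial
      obtain ⟨P, hP, hxP⟩ := hx1
      refine ⟨P, ⟨hP, ?_⟩, hxP⟩
      by_contra hwP
      exact (hball hx) ⟨P, ⟨hP, hwP⟩, hxP⟩
    have hii := interior_maximal hsub Metric.isOpen_ball
    rw [hiu] at hii
    exact hii (Metric.mem_ball_self hε)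
  obtain ⟨P, hP, hwP, hPfd⟩ := hfull
  refine ⟨P, hP, hPfd, ?_⟩
  have hne : (Λ ∩ P).Nonempty := ⟨w, hwΛ, hwP⟩
  obtain ⟨u, r, hge, heq⟩ := (C.inter_face Λ hΛ P hP hne).1
  have hwface : w ∈ {x ∈ Λ | u x = r} := by
    rw [← heq]; exact ⟨hwΛ, hwP⟩
  intro z hz
  have huz : u z = r := hwit u r hge hwface.2 z hz
  have hzin : z ∈ Λ ∩ P := by
    rw [heq]; exact ⟨hz, huz⟩
  exact hzin.2

lemma vtx_rat (C : PolyComplex n) {v : Fin n → ℝ} (hv : v ∈ C.vtx) :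
    ∃ vq : Fin n → ℚ, v = ιQ vq := by
  classical
  obtain ⟨V, R, hV, hPeq⟩ := C.rat {v} hv
  obtain ⟨p0, hp0⟩ := hV
  have hmem := mem_polyhedronOf_add (V := V) (R := R)
    (fun p => if p = p0 then 1 else 0) (fun _ => 0)
    (fun p => by split <;> norm_num)
    (by rw [Finset.sum_ite_eq' V p0 (fun _ => (1:ℝ)), if_pos hp0]) (fun _ => le_rfl)
  have hval : (∑ p ∈ V, (if p = p0 then (1:ℝ) else 0) • ιQ p) + ∑ w ∈ R, (0:ℝ) • ιQ w
      = ιQ p0 := by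
    simp only [ite_smul, one_smul, zero_smul]
    rw [Finset.sum_ite_eq' V p0 (fun p => ιQ p), if_pos hp0, Finset.sum_const, smul_zero,
      add_zero]
  rw [hval, ← hPeq] at hmem
  exact ⟨p0, (Set.mem_singleton_iff.mp hmem).symm⟩

lemma cone_mem_sub {v x : Fin n → ℝ} {P : Set (Fin n → ℝ)} (hx : x ∈ P) :
    x - v ∈ coneAt v P :=
  ⟨1, zero_le_one, x, hx, (one_smul ℝ (x - v)).symm⟩

lemma cone_mono (v : Fin n → ℝ) {P Q : Set (Fin n → ℝ)} (hPQ : P ⊆ Q) :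
    coneAt v P ⊆ coneAt v Q := by
  rintro y ⟨c, hc, x, hx, rfl⟩
  exact ⟨c, hc, x, hPQ hx, rfl⟩

end Aux

section Main

open MvPolynomial

variable {n : ℕ}

lemma ball_shift {x0 v y : Fin n → ℝ} {ε : ℝ} (hy : y ∈ Metric.ball (x0 - v) ε) :
    y + v ∈ Metric.ball x0 ε := by
  rw [Metric.mem_ball] at hy ⊢
  calc dist (y + v) x0 = dist (y + v) ((x0 - v) + v) := by rw [sub_add_cancel]
    _ = dist y (x0 - v) := dist_add_right y (x0 - v) v
    _ < ε := hy

lemma stmt11_part1 (C : PolyComplex n) (hC : C.IsComplete)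
    (hSCR : ∀ P ∈ C.polys, ∃ v ∈ C.vtx, v ∈ P)
    (f : (Fin n → ℝ) → ((Fin n → ℝ) → ℝ)) (hf : AffinePP C 1 f) :
    ∃! g : (Fin n → ℝ) → ℝ, IsPA C g ∧ Induces C f g := by
  classical
  have hcover : ∀ x : Fin n → ℝ, ∃ Λ, Λ ∈ C.polys ∧ ∃ v, v ∈ C.vtx ∧ v ∈ Λ ∧ x ∈ Λ := by
    intro x
    have hx : x ∈ ⋃₀ C.polys := by rw [hC]; trivial
    obtain ⟨Λ, hΛ, hxΛ⟩ := hx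
    obtain ⟨v, hv, hvΛ⟩ := hSCR Λ hΛ
    exact ⟨Λ, hΛ, v, hv, hvΛ, hxΛ⟩
  choose Λf hΛf vf hvf hvΛf hxf using hcover
  set g : (Fin n → ℝ) → ℝ := fun x => f (vf x) (x - vf x) with hgdef
  have AGREE : ∀ P ∈ C.polys, FullDim P → ∀ v ∈ C.vtx, v ∈ P → ∀ w ∈ C.vtx, w ∈ P →
      ∀ x ∈ P, f v (x - v) = f w (x - w) := by
    intro P hP hFD v hv hvP w hw hwP x hx
    obtain ⟨p, hpdeg, hprep⟩ := hf.1 v hv P hP hvP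
    obtain ⟨q, hqdeg, hqrep⟩ := hf.1 w hw P hP hwP
    have h2 := hf.2 P hP hFD v hv hvP w hw hwP p q hpdeg hprep hqdeg hqrep x
    rw [hprep _ (cone_mem_sub hx), hqrep _ (cone_mem_sub hx)]
    exact h2
  have WD : ∀ (x : Fin n → ℝ) (Λ₁ : Set (Fin n → ℝ)), Λ₁ ∈ C.polys →
      ∀ v₁ ∈ C.vtx, v₁ ∈ Λ₁ → x ∈ Λ₁ →
      ∀ (Λ₂ : Set (Fin n → ℝ)), Λ₂ ∈ C.polys → ∀ v₂ ∈ C.vtx, v₂ ∈ Λ₂ → x ∈ Λ₂ →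
      f v₁ (x - v₁) = f v₂ (x - v₂) := by
    intro x Λ₁ hΛ₁ v₁ hv₁ hv₁Λ hxΛ₁ Λ₂ hΛ₂ v₂ hv₂ hv₂Λ hxΛ₂
    obtain ⟨P₁, hP₁, hFD₁, hsub₁⟩ := exists_fulldim C hC hΛ₁
    obtain ⟨P₂, hP₂, hFD₂, hsub₂⟩ := exists_fulldim C hC hΛ₂
    have hne : (P₁ ∩ P₂).Nonempty := ⟨x, hsub₁ hxΛ₁, hsub₂ hxΛ₂⟩
    have hface := (C.inter_face P₁ hP₁ P₂ hP₂ hne).1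
    have hmem0 := C.face_mem P₁ hP₁ _ hface hne
    obtain ⟨u, hu, huP⟩ := hSCR _ hmem0
    calc f v₁ (x - v₁) = f u (x - u) :=
        AGREE P₁ hP₁ hFD₁ v₁ hv₁ (hsub₁ hv₁Λ) u hu huP.1 x (hsub₁ hxΛ₁)
      _ = f v₂ (x - v₂) :=
        AGREE P₂ hP₂ hFD₂ u hu huP.2 v₂ hv₂ (hsub₂ hv₂Λ) x (hsub₂ hxΛ₂)
  have GVAL : ∀ Λ ∈ C.polys, ∀ v ∈ C.vtx, v ∈ Λ → ∀ x ∈ Λ, g x = f v (x - v) := by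
    intro Λ hΛ v hv hvΛ x hx
    exact WD x (Λf x) (hΛf x) (vf x) (hvf x) (hvΛf x) (hxf x) Λ hΛ v hv hvΛ hx
  have PIECE : ∀ Λ ∈ C.polys, ∃ p : MvPolynomial (Fin n) ℚ, p.totalDegree ≤ 1 ∧
      ∀ x ∈ Λ, g x = evalR p x := by
    intro Λ hΛ
    obtain ⟨v, hv, hvΛ⟩ := hSCR Λ hΛ
    obtain ⟨P, hP, hFD, hsub⟩ := exists_fulldim C hC hΛ
    obtain ⟨p, hpdeg, hprep⟩ := hf.1 v hv P hP (hsub hvΛ)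
    obtain ⟨a, l, hal⟩ := eval_eq_affine_of_totalDegree_le_one p hpdeg
    obtain ⟨vq, hvq⟩ := vtx_rat C hv
    refine ⟨affinePoly (a - ∑ i, l i * vq i) l, totalDegree_affinePoly_le _ _, ?_⟩
    intro x hx
    rw [GVAL Λ hΛ v hv hvΛ x hx, hprep _ (cone_mono v hsub (cone_mem_sub hx)), hal,
      evalR_affinePoly]
    have hsubi : ∀ i, (x - v) i = x i - (vq i : ℝ) := by
      intro i; rw [hvq]; rfl
    simp only [hsubi, mul_sub]
    rw [Finset.sum_sub_distrib]
    push_cast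
    ring
  have hcont : Continuous g := by
    have hfin : Finite ↥C.polys := C.finite.to_subtype
    refine LocallyFinite.continuous (f := fun P : ↥C.polys => (P : Set (Fin n → ℝ)))
      (locallyFinite_of_finite _) ?_ (fun P => poly_closed C P.2) ?_
    · rw [← Set.sUnion_eq_iUnion]
      exact hC
    · intro P
      obtain ⟨p, hdeg, hrep⟩ := PIECE P P.2
      obtain ⟨a, l, hal⟩ := eval_eq_affine_of_totalDegree_le_one p hdeg
      have hc : ContinuousOn (fun x : Fin n → ℝ => (a:ℝ) + ∑ i, (l i:ℝ) * x i) P :=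
        (continuous_const.add
          (continuous_finset_sum _ fun i _ => continuous_const.mul (continuous_apply i))).continuousOn
      exact hc.congr (fun x hx => by rw [hrep x hx, hal])
  refine ⟨g, ⟨⟨hcont, PIECE⟩, ?_⟩, ?_⟩
  · intro v hv Λ hΛ hvΛ x hx
    exact GVAL Λ hΛ v hv hvΛ x hx
  · rintro g' ⟨_, hInd'⟩
    funext x
    rw [hInd' (vf x) (hvf x) (Λf x) (hΛf x) (hvΛf x) x (hxf x)]

lemma stmt11_part2 (C : PolyComplex n) (hC : C.IsComplete)
    (hSCR : ∀ P ∈ C.polys, ∃ v ∈ C.vtx, v ∈ P)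
    (g : (Fin n → ℝ) → ℝ) (hg : IsPA C g) :
    ∃ f, AffinePP C 1 f ∧ Induces C f g ∧
      ∀ f', AffinePP C 1 f' → Induces C f' g →
        ∀ v ∈ C.vtx, ∀ y, InStar C v y → f' v y = f v y := by
  classical
  have hrepAll : ∀ Λ : Set (Fin n → ℝ), ∃ (a : ℚ) (l : Fin n → ℚ),
      Λ ∈ C.polys → ∀ x ∈ Λ, g x = (a:ℝ) + ∑ i, (l i:ℝ) * x i := by
    intro Λ
    by_cases hΛ : Λ ∈ C.polys
    · obtain ⟨p, hdeg, hrep⟩ := hg.2 Λ hΛ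
      obtain ⟨a, l, hal⟩ := eval_eq_affine_of_totalDegree_le_one p hdeg
      exact ⟨a, l, fun _ x hx => by rw [hrep x hx, hal]⟩
    · exact ⟨0, 0, fun h => absurd h hΛ⟩
  choose aQ lQ hrepQ using hrepAll
  have KEY : ∀ (v : Fin n → ℝ) (P : Set (Fin n → ℝ)), P ∈ C.polys → v ∈ P →
      ∀ (P' : Set (Fin n → ℝ)), P' ∈ C.polys → v ∈ P' →
      ∀ y, y ∈ coneAt v P → y ∈ coneAt v P' →
      ∑ i, (lQ P i : ℝ) * y i = ∑ i, (lQ P' i : ℝ) * y i := by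
    intro v P hP hvP P' hP' hvP' y hy hy'
    have main : ∀ (Q : Set (Fin n → ℝ)), Q ∈ C.polys → v ∈ Q →
        ∀ (xq : Fin n → ℝ), xq ∈ Q → ∀ (cq s : ℝ), 0 < cq → 0 < s → s ≤ cq⁻¹ →
        g (v + s • (cq • (xq - v))) - g v = s * ∑ i, (lQ Q i:ℝ) * (cq • (xq - v)) i := by
      intro Q hQ hvQ xq hxq cq s hcq hs hscq
      have hsc1 : s * cq ≤ 1 := by
        have h := mul_le_mul_of_nonneg_right hscq hcq.le
        rwa [inv_mul_cancel₀ (ne_of_gt hcq)] at h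
      have hz : v + s • (cq • (xq - v)) = (1 - s*cq) • v + (s*cq) • xq := by
        rw [smul_smul, smul_sub, sub_smul, one_smul]
        abel
      have hzQ : (v + s • (cq • (xq - v))) ∈ Q := by
        rw [hz]
        exact poly_convex C hQ hvQ hxq (by linarith) (by positivity) (by ring)
      rw [hrepQ Q hQ _ hzQ, hrepQ Q hQ v hvQ]
      simp only [Pi.add_apply, Pi.smul_apply, Pi.sub_apply, smul_eq_mul]
      rw [Finset.mul_sum, add_sub_add_left_eq_sub, ← Finset.sum_sub_distrib]
      exact Finset.sum_congr rfl fun i _ => by ring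
    obtain ⟨c, hc, xb, hxb, rfl⟩ := hy
    obtain ⟨c', hc', xb', hxb', hyeq'⟩ := hy'
    by_cases hc0 : c = 0
    · subst hc0
      simp
    by_cases hc'0 : c' = 0
    · rw [hyeq']
      subst hc'0
      simp
    have hcpos : 0 < c := lt_of_le_of_ne hc (Ne.symm hc0)
    have hc'pos : 0 < c' := lt_of_le_of_ne hc' (Ne.symm hc'0)
    have hspos : 0 < min c⁻¹ c'⁻¹ := lt_min (inv_pos.mpr hcpos) (inv_pos.mpr hc'pos)
    have h1 := main P hP hvP xb hxb c (min c⁻¹ c'⁻¹) hcpos hspos (min_le_left _ _)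
    have h2 := main P' hP' hvP' xb' hxb' c' (min c⁻¹ c'⁻¹) hc'pos hspos (min_le_right _ _)
    rw [← hyeq'] at h2
    exact mul_left_cancel₀ (ne_of_gt hspos) (h1.symm.trans h2)
  set f : (Fin n → ℝ) → (Fin n → ℝ) → ℝ := fun v y =>
    if h : InStar C v y then g v + ∑ i, (lQ h.choose i : ℝ) * y i else 0 with hfdef
  have VAL : ∀ (v : Fin n → ℝ) (P : Set (Fin n → ℝ)), P ∈ C.polys → v ∈ P →
      ∀ y ∈ coneAt v P, f v y = g v + ∑ i, (lQ P i : ℝ) * y i := by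
    intro v P hP hvP y hy
    have h : InStar C v y := ⟨P, hP, hvP, hy⟩
    rw [hfdef]
    dsimp only
    rw [dif_pos h]
    congr 1
    exact KEY v h.choose h.choose_spec.1 h.choose_spec.2.1 P hP hvP y h.choose_spec.2.2 hy
  have hA1 : ∀ v ∈ C.vtx, StarPP C v 1 (f v) := by
    intro v hv P hP hvP
    obtain ⟨vq, hvq⟩ := vtx_rat C hv
    refine ⟨affinePoly (aQ P + ∑ i, lQ P i * vq i) (lQ P), totalDegree_affinePoly_le _ _, ?_⟩
    intro y hy
    rw [VAL v P hP hvP y hy, evalR_affinePoly, hrepQ P hP v hvP]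
    have hvi : ∀ i, v i = (vq i : ℝ) := by
      intro i; rw [hvq]; rfl
    simp only [hvi]
    push_cast
    ring
  have hA2 : ∀ Λ ∈ C.polys, FullDim Λ → ∀ v ∈ C.vtx, v ∈ Λ → ∀ v' ∈ C.vtx, v' ∈ Λ →
      ∀ p p' : MvPolynomial (Fin n) ℚ, p.totalDegree ≤ 1 →
      (∀ y ∈ coneAt v Λ, f v y = evalR p y) → p'.totalDegree ≤ 1 →
      (∀ y ∈ coneAt v' Λ, f v' y = evalR p' y) →
      ∀ x : Fin n → ℝ, evalR p (x - v) = evalR p' (x - v') := by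
    intro Λ hΛ hFD v hv hvΛ v' hv' hv'Λ p p' hdeg hrep hdeg' hrep' x
    obtain ⟨x0, hx0⟩ := hFD
    obtain ⟨ε, hε, hball⟩ := Metric.isOpen_iff.mp isOpen_interior x0 hx0
    have hballΛ : Metric.ball x0 ε ⊆ Λ := hball.trans interior_subset
    have CLAIM : ∀ (w : Fin n → ℝ), w ∈ Λ →
        ∀ q : MvPolynomial (Fin n) ℚ, q.totalDegree ≤ 1 →
        (∀ y ∈ coneAt w Λ, f w y = evalR q y) →
        ∀ z : Fin n → ℝ, evalR q (z - w) = (aQ Λ : ℝ) + ∑ i, (lQ Λ i:ℝ) * z i := by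
      intro w hwΛ q hqdeg hqrep z
      obtain ⟨b, mq, hbm⟩ := eval_eq_affine_of_totalDegree_le_one q hqdeg
      have hagree : ∀ y ∈ Metric.ball (x0 - w) ε,
          (b:ℝ) + ∑ i, (mq i:ℝ) * y i = (g w) + ∑ i, (lQ Λ i:ℝ) * y i := by
        intro y hyball
        have hyv : y + w ∈ Λ := hballΛ (ball_shift hyball)
        have hyc : y ∈ coneAt w Λ :=
          ⟨1, zero_le_one, y + w, hyv, by rw [one_smul, add_sub_cancel_right]⟩
        rw [← hbm, ← hqrep y hyc, VAL w Λ hΛ hwΛ y hyc]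
      have hall := affine_eq_of_ball hε hagree (z - w)
      rw [hbm, hall, hrepQ Λ hΛ w hwΛ]
      simp only [Pi.sub_apply, mul_sub]
      rw [Finset.sum_sub_distrib]
      ring
    rw [CLAIM v hvΛ p hdeg hrep x, CLAIM v' hv'Λ p' hdeg' hrep' x]
  have hInd : Induces C f g := by
    intro v hv Λ hΛ hvΛ x hx
    have hxc : x - v ∈ coneAt v Λ := cone_mem_sub hx
    rw [VAL v Λ hΛ hvΛ _ hxc, hrepQ Λ hΛ x hx, hrepQ Λ hΛ v hvΛ]
    simp only [Pi.sub_apply, mul_sub]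
    rw [Finset.sum_sub_distrib]
    ring
  refine ⟨f, ⟨hA1, hA2⟩, hInd, ?_⟩
  intro f' hf' hInd' v hv y hyStar
  obtain ⟨P, hP, hvP, hyc⟩ := hyStar
  obtain ⟨P₁, hP₁, hFD₁, hsub⟩ := exists_fulldim C hC hP
  have hvP₁ : v ∈ P₁ := hsub hvP
  have hyc₁ : y ∈ coneAt v P₁ := cone_mono v hsub hyc
  obtain ⟨p', hdeg', hrep'⟩ := hf'.1 v hv P₁ hP₁ hvP₁
  obtain ⟨b, mq, hbm⟩ := eval_eq_affine_of_totalDegree_le_one p' hdeg'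
  obtain ⟨x0, hx0⟩ := hFD₁
  obtain ⟨ε, hε, hball⟩ := Metric.isOpen_iff.mp isOpen_interior x0 hx0
  have hballP : Metric.ball x0 ε ⊆ P₁ := hball.trans interior_subset
  have hagree : ∀ z ∈ Metric.ball (x0 - v) ε,
      (b:ℝ) + ∑ i, (mq i:ℝ) * z i = g v + ∑ i, (lQ P₁ i:ℝ) * z i := by
    intro z hz
    have hzv : z + v ∈ P₁ := hballP (ball_shift hz)
    have hzc : z ∈ coneAt v P₁ :=
      ⟨1, zero_le_one, z + v, hzv, by rw [one_smul, add_sub_cancel_right]⟩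
    have h1 : f' v z = g (z + v) := by
      have h2 := hInd' v hv P₁ hP₁ hvP₁ (z + v) hzv
      rw [add_sub_cancel_right] at h2
      exact h2.symm
    rw [← hbm, ← hrep' z hzc, h1, hrepQ P₁ hP₁ _ hzv, hrepQ P₁ hP₁ v hvP₁]
    simp only [Pi.add_apply, mul_add]
    rw [Finset.sum_add_distrib]
    ring
  have hall := affine_eq_of_ball hε hagree y
  rw [hrep' y hyc₁, hbm, hall, VAL v P₁ hP₁ hvP₁ y hyc₁]

end Main

/-- A degree-one affine piecewise polynomial function on a complete regular
SCR polyhedral complex `Π` induces a unique continuous piecewise affine function on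
`N_ℝ`, and conversely every piecewise affine function with respect to `Π` arises from a
degree-one affine piecewise polynomial function, unique on the stars of the vertices;
hence `PP^1(Π)` is identified with the space of piecewise affine functions on `Π`. -/
theorem stmt11 {n : ℕ} (C : PolyComplex n) (hC : C.IsComplete) (hreg : C.IsRegular)
    (hSCR : ∀ P ∈ C.polys, ∃ v ∈ C.vtx, v ∈ P) :
    (∀ f, AffinePP C 1 f → ∃! g : (Fin n → ℝ) → ℝ, IsPA C g ∧ Induces C f g) ∧
    (∀ g, IsPA C g → ∃ f, AffinePP C 1 f ∧ Induces C f g ∧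
      ∀ f', AffinePP C 1 f' → Induces C f' g →
        ∀ v ∈ C.vtx, ∀ y, InStar C v y → f' v y = f v y) := by
  exact ⟨fun f hf => stmt11_part1 C hC hSCR f hf, fun g hg => stmt11_part2 C hC hSCR g hg⟩

end PPArakelov
end
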